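/- arXiv:1711.02297 — 3 statements merged into one kernel-verified Lean document; each statement's English description precedes it below -/
import Mathlib

section
/- Let K be a ranked partially ordered set of rank n with a least face and a greatest face in which every chain is contained in a flag (a maximal chain with n+2 elements). Then K is strongly connected if and only if K is strongly flag-connected. -/
open Set Pointwise

/-- `Φ` is a flag of the subset `s` of the poset `α`: a chain contained in `s`
that is maximal among chains contained in `s`. -/
def IsFlagOf {α : Type*} [PartialOrder α] (s Φ : Set α) : Prop :=
  Φ ⊆ s ∧ IsChain (· ≤ ·) Φ ∧
    ∀ Ψ : Set α, Ψ ⊆ s → IsChain (· ≤ ·) Ψ → Φ ⊆ Ψ → Ψ = Φ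

/-- Two flags are adjacent if each differs from the other in exactly one face. -/
def FlagAdj {α : Type*} [PartialOrder α] (Φ Ψ : Set α) : Prop :=
  (Φ \ Ψ).ncard = 1 ∧ (Ψ \ Φ).ncard = 1

/-- The set `s` is flag-connected: any two flags of `s` are joined by a sequence
of successively adjacent flags of `s`. -/
def FlagConnIn {α : Type*} [PartialOrder α] (s : Set α) : Prop :=
  ∀ Φ Ψ : Set α, IsFlagOf s Φ → IsFlagOf s Ψ →
    Relation.ReflTransGen
      (fun A B => IsFlagOf s A ∧ IsFlagOf s B ∧ FlagAdj A B) Φ Ψ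

/-- The section between `F` and `G` is connected: any two of its proper faces are
joined by a finite sequence of successively incident proper faces of the section. -/
def ConnIn {α : Type*} [PartialOrder α] (F G : α) : Prop :=
  ∀ H K : α, F < H → H < G → F < K → K < G →
    Relation.ReflTransGen
      (fun a b => F < a ∧ a < G ∧ F < b ∧ b < G ∧ (a ≤ b ∨ b ≤ a)) H K

/-- An incidence complex of rank `n`: a bounded ranked poset (rank function `rk`
with range `{-1,…,n}`, strictly monotone, all flags having `n+2` elements hitting
every rank), strongly connected (I3), and with at least two `i`-faces between any
incident pair of faces of ranks `i-1` and `i+1` (I4). -/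
structure IncComplex (α : Type*) [PartialOrder α] [BoundedOrder α]
    (n : ℤ) (rk : α → ℤ) : Prop where
  rk_bot : rk (⊥ : α) = -1
  rk_top : rk (⊤ : α) = n
  rk_strictMono : ∀ a b : α, a < b → rk a < rk b
  chain_flag : ∀ c : Set α, IsChain (· ≤ ·) c →
    ∃ Φ : Set α, c ⊆ Φ ∧ IsFlagOf Set.univ Φ ∧ Φ.ncard = (n + 2).toNat
  flag_rk : ∀ Φ : Set α, IsFlagOf Set.univ Φ →
    ∀ i ∈ Set.Icc (-1 : ℤ) n, ∃ a ∈ Φ, rk a = i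
  strong_conn : ∀ F G : α, F ≤ G → 2 ≤ rk G - rk F - 1 → ConnIn F G
  two_between : ∀ F G : α, F < G → rk G = rk F + 2 →
    ∃ H H' : α, H ≠ H' ∧ F < H ∧ H < G ∧ F < H' ∧ H' < G

/-- A complex is regular if its automorphism group acts transitively on flags. -/
def IsRegularIC (α : Type*) [PartialOrder α] : Prop :=
  ∀ Φ Ψ : Set α, IsFlagOf Set.univ Φ → IsFlagOf Set.univ Ψ →
    ∃ g : α ≃o α, ⇑g '' Φ = Ψ

/-- `Γ` is a flag-transitive subgroup of the automorphism group. -/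
def FlagTrans {α : Type*} [PartialOrder α] (Γ : Subgroup (α ≃o α)) : Prop :=
  ∀ Φ Ψ : Set α, IsFlagOf Set.univ Φ → IsFlagOf Set.univ Ψ →
    ∃ g ∈ Γ, ⇑g '' Φ = Ψ

/-- The distinguished generating subset `R_i`: the stabilizer in `Γ` of
`Φ \ {F_i}`, where `F` enumerates the base flag by rank. -/
def Rset {α : Type*} [PartialOrder α] (Γ : Subgroup (α ≃o α)) (F : ℤ → α)
    (n i : ℤ) : Set (α ≃o α) :=
  {g | g ∈ Γ ∧ ∀ j ∈ Set.Icc (-1 : ℤ) n, j ≠ i → g (F j) = F j}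

set_option linter.unusedSectionVars false

section IC0
open Relation

variable {α : Type*} [PartialOrder α]

lemma IC0.union_diff_eq {A B T : Set α} (h : A ∩ T ⊆ B) : (A ∪ T) \ (B ∪ T) = A \ B := by
  ext x
  constructor
  · rintro ⟨hx | hx, hnx⟩
    · exact ⟨hx, fun h' => hnx (Or.inl h')⟩
    · exact absurd (Or.inr hx) hnx
  · rintro ⟨hxA, hxB⟩
    refine ⟨Or.inl hxA, ?_⟩
    rintro (h' | h')
    · exact hxB h'
    · exact hxB (h ⟨hxA, h'⟩)

lemma IC0.flagAdj_union {A B T : Set α} (hAB : FlagAdj A B) (h1 : A ∩ T ⊆ B)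
    (h2 : B ∩ T ⊆ A) : FlagAdj (A ∪ T) (B ∪ T) :=
  ⟨by rw [IC0.union_diff_eq h1]; exact hAB.1, by rw [IC0.union_diff_eq h2]; exact hAB.2⟩

lemma IC0.rk_injOn {rk : α → ℤ} (hm : ∀ a b : α, a < b → rk a < rk b)
    {c : Set α} (hc : IsChain (· ≤ ·) c) : Set.InjOn rk c := by
  intro a ha b hb hab
  by_contra hne
  rcases hc.total ha hb with h | h
  · exact absurd hab (ne_of_lt (hm a b (lt_of_le_of_ne h hne)))
  · exact absurd hab.symm (ne_of_lt (hm b a (lt_of_le_of_ne h (Ne.symm hne))))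

lemma IC0.rk_mono {rk : α → ℤ} (hm : ∀ a b : α, a < b → rk a < rk b)
    {a b : α} (h : a ≤ b) : rk a ≤ rk b := by
  rcases lt_or_eq_of_le h with h' | rfl
  · exact le_of_lt (hm a b h')
  · exact le_rfl

/-- endpoints belong to every flag of a section. -/
lemma IC0.flag_mem_ends {F G : α} (hFG : F ≤ G) {Ψ : Set α}
    (hΨ : IsFlagOf (Set.Icc F G) Ψ) : F ∈ Ψ ∧ G ∈ Ψ := by
  constructor
  · have hc : IsChain (· ≤ ·) (insert F Ψ) :=
      hΨ.2.1.insert fun b hb _ => Or.inl (hΨ.1 hb).1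
    have := hΨ.2.2 (insert F Ψ) (insert_subset ⟨le_refl F, hFG⟩ hΨ.1) hc (subset_insert _ _)
    rw [← this]; exact mem_insert _ _
  · have hc : IsChain (· ≤ ·) (insert G Ψ) :=
      hΨ.2.1.insert fun b hb _ => Or.inr (hΨ.1 hb).2
    have := hΨ.2.2 (insert G Ψ) (insert_subset ⟨hFG, le_refl G⟩ hΨ.1) hc (subset_insert _ _)
    rw [← this]; exact mem_insert _ _

/-- the intersection of a global flag with a section is a flag of the section. -/
lemma IC0.sec_flag {Φ : Set α} (hΦ : IsFlagOf Set.univ Φ) {F G : α} (hFG : F ≤ G)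
    (hF : F ∈ Φ) (hG : G ∈ Φ) : IsFlagOf (Set.Icc F G) (Φ ∩ Set.Icc F G) := by
  refine ⟨inter_subset_right, hΦ.2.1.mono inter_subset_left, ?_⟩
  intro Ψ hΨs hΨc hsub
  have cross : ∀ x ∈ Ψ, ∀ y ∈ Φ, x ≤ y ∨ y ≤ x := by
    intro x hx y hy
    have hxI := hΨs hx
    rcases eq_or_ne y F with rfl | hyF
    · exact Or.inr hxI.1
    rcases hΦ.2.1.total hy hF with h | h
    · exact Or.inr (h.trans hxI.1)
    rcases eq_or_ne y G with rfl | hyG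
    · exact Or.inl hxI.2
    rcases hΦ.2.1.total hy hG with h' | h'
    · have : y ∈ Ψ := hsub ⟨hy, h, h'⟩
      rcases eq_or_ne x y with rfl | hxy
      · exact Or.inl le_rfl
      · exact hΨc hx this hxy
    · exact Or.inl (hxI.2.trans h')
  have hchain : IsChain (· ≤ ·) (Ψ ∪ Φ) := by
    intro x hx y hy hxy
    rcases hx with hx | hx <;> rcases hy with hy | hy
    · exact hΨc hx hy hxy
    · exact cross x hx y hy
    · exact (cross y hy x hx).symm
    · exact hΦ.2.1 hx hy hxy
  have hU : Ψ ∪ Φ = Φ := hΦ.2.2 _ (subset_univ _) hchain subset_union_right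
  have hΨΦ : Ψ ⊆ Φ := by rw [← hU]; exact subset_union_left
  exact subset_antisymm (subset_inter hΨΦ hΨs) hsub


variable [BoundedOrder α] {n : ℤ} {rk : α → ℤ}

/-- every global flag has the standard cardinality. -/
lemma IC0.flag_ncard
    (chain_flag : ∀ c : Set α, IsChain (· ≤ ·) c →
      ∃ Φ : Set α, c ⊆ Φ ∧ IsFlagOf Set.univ Φ ∧ Φ.ncard = (n + 2).toNat)
    {Φ : Set α} (hΦ : IsFlagOf Set.univ Φ) : Φ.ncard = (n + 2).toNat := by
  obtain ⟨Φ', hsub, hΦ', hcard⟩ := chain_flag Φ hΦ.2.1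
  have : Φ' = Φ := hΦ.2.2 Φ' (subset_univ _) hΦ'.2.1 hsub
  rwa [this] at hcard

lemma IC0.n_ge (rk_bot : rk (⊥ : α) = -1) (rk_top : rk (⊤ : α) = n)
    (hm : ∀ a b : α, a < b → rk a < rk b) : (-1 : ℤ) ≤ n := by
  have := IC0.rk_mono hm (bot_le : (⊥ : α) ≤ ⊤)
  rw [rk_bot, rk_top] at this; exact this

/-- the rank function maps a global flag bijectively onto `[-1, n]`. -/
lemma IC0.flag_rk_image (rk_bot : rk (⊥ : α) = -1) (rk_top : rk (⊤ : α) = n)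
    (hm : ∀ a b : α, a < b → rk a < rk b)
    (chain_flag : ∀ c : Set α, IsChain (· ≤ ·) c →
      ∃ Φ : Set α, c ⊆ Φ ∧ IsFlagOf Set.univ Φ ∧ Φ.ncard = (n + 2).toNat)
    (flag_rk : ∀ Φ : Set α, IsFlagOf Set.univ Φ →
      ∀ i ∈ Set.Icc (-1 : ℤ) n, ∃ a ∈ Φ, rk a = i)
    {Φ : Set α} (hΦ : IsFlagOf Set.univ Φ) :
    rk '' Φ = Set.Icc (-1 : ℤ) n ∧ Φ.Finite := by
  have hn : (-1 : ℤ) ≤ n := IC0.n_ge rk_bot rk_top hm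
  have hcard := IC0.flag_ncard chain_flag hΦ
  have hfin : Φ.Finite := by
    apply Set.finite_of_ncard_ne_zero
    rw [hcard]; omega
  have hS : (Set.Icc (-1 : ℤ) n).ncard = (n + 2).toNat := by
    rw [← Finset.coe_Icc, Set.ncard_coe_finset, Int.card_Icc]
    congr 1; omega
  have hsub : Set.Icc (-1 : ℤ) n ⊆ rk '' Φ := by
    intro i hi
    obtain ⟨a, ha, hai⟩ := flag_rk Φ hΦ i hi
    exact ⟨a, ha, hai⟩
  have himg : (rk '' Φ).ncard = Φ.ncard := Set.ncard_image_of_injOn (IC0.rk_injOn hm hΦ.2.1)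
  have : Set.Icc (-1 : ℤ) n = rk '' Φ :=
    Set.eq_of_subset_of_ncard_le hsub (by rw [himg, hcard, hS]) (hfin.image rk)
  exact ⟨this.symm, hfin⟩

/-- every flag of a section is the intersection of a global flag with the section. -/
lemma IC0.sec_flag_rep
    (chain_flag : ∀ c : Set α, IsChain (· ≤ ·) c →
      ∃ Φ : Set α, c ⊆ Φ ∧ IsFlagOf Set.univ Φ ∧ Φ.ncard = (n + 2).toNat)
    {F G : α} (hFG : F ≤ G) {Ψ : Set α} (hΨ : IsFlagOf (Set.Icc F G) Ψ) :
    ∃ Φ : Set α, IsFlagOf Set.univ Φ ∧ F ∈ Φ ∧ G ∈ Φ ∧ Ψ = Φ ∩ Set.Icc F G := by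
  obtain ⟨hF, hG⟩ := IC0.flag_mem_ends hFG hΨ
  obtain ⟨Φ, hsub, hΦ, -⟩ := chain_flag Ψ hΨ.2.1
  refine ⟨Φ, hΦ, hsub hF, hsub hG, ?_⟩
  exact (hΨ.2.2 (Φ ∩ Set.Icc F G) inter_subset_right (hΦ.2.1.mono inter_subset_left)
    (subset_inter hsub hΨ.1)).symm

/-- the rank function maps a flag of a section onto `[rk F, rk G]`. -/
lemma IC0.sec_flag_image (rk_bot : rk (⊥ : α) = -1) (rk_top : rk (⊤ : α) = n)
    (hm : ∀ a b : α, a < b → rk a < rk b)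
    (chain_flag : ∀ c : Set α, IsChain (· ≤ ·) c →
      ∃ Φ : Set α, c ⊆ Φ ∧ IsFlagOf Set.univ Φ ∧ Φ.ncard = (n + 2).toNat)
    (flag_rk : ∀ Φ : Set α, IsFlagOf Set.univ Φ →
      ∀ i ∈ Set.Icc (-1 : ℤ) n, ∃ a ∈ Φ, rk a = i)
    {F G : α} (hFG : F ≤ G) {Ψ : Set α} (hΨ : IsFlagOf (Set.Icc F G) Ψ) :
    rk '' Ψ = Set.Icc (rk F) (rk G) := by
  obtain ⟨Φ, hΦ, hF, hG, rfl⟩ := IC0.sec_flag_rep chain_flag hFG hΨ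
  apply subset_antisymm
  · rintro i ⟨a, ⟨haΦ, haI⟩, rfl⟩
    exact ⟨IC0.rk_mono hm haI.1, IC0.rk_mono hm haI.2⟩
  · rintro i ⟨hi1, hi2⟩
    have hFn : (-1 : ℤ) ≤ rk F := by
      have := IC0.rk_mono hm (bot_le : (⊥ : α) ≤ F); rwa [rk_bot] at this
    have hGn : rk G ≤ n := by
      have := IC0.rk_mono hm (le_top : G ≤ (⊤ : α)); rwa [rk_top] at this
    obtain ⟨a, haΦ, rfl⟩ := flag_rk Φ hΦ i ⟨le_trans hFn hi1, le_trans hi2 hGn⟩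
    refine ⟨a, ⟨haΦ, ?_, ?_⟩, rfl⟩
    · rcases hΦ.2.1.total hF haΦ with h | h
      · exact h
      · rcases lt_or_eq_of_le h with h' | rfl
        · exact absurd (hm a F h') (by omega)
        · exact le_rfl
    · rcases hΦ.2.1.total haΦ hG with h | h
      · exact h
      · rcases lt_or_eq_of_le h with h' | rfl
        · exact absurd (hm G a h') (by omega)
        · exact le_rfl

/-- a chain in a section extends to a flag of the section. -/
lemma IC0.extend_chain_sec
    (chain_flag : ∀ c : Set α, IsChain (· ≤ ·) c →
      ∃ Φ : Set α, c ⊆ Φ ∧ IsFlagOf Set.univ Φ ∧ Φ.ncard = (n + 2).toNat)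
    {F G : α} (hFG : F ≤ G) {c : Set α} (hc : IsChain (· ≤ ·) c)
    (hcs : c ⊆ Set.Icc F G) : ∃ Ξ : Set α, IsFlagOf (Set.Icc F G) Ξ ∧ c ⊆ Ξ := by
  have hc1 : IsChain (· ≤ ·) (insert G c) := hc.insert fun b hb _ => Or.inr (hcs hb).2
  have hc2 : IsChain (· ≤ ·) (insert F (insert G c)) := by
    refine hc1.insert fun b hb _ => ?_
    rcases hb with rfl | hb
    · exact Or.inl hFG
    · exact Or.inl (hcs hb).1
  obtain ⟨Φ, hsub, hΦ, -⟩ := chain_flag _ hc2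
  have hF : F ∈ Φ := hsub (mem_insert _ _)
  have hG : G ∈ Φ := hsub (mem_insert_of_mem _ (mem_insert _ _))
  refine ⟨Φ ∩ Set.Icc F G, IC0.sec_flag hΦ hFG hF hG, subset_inter ?_ hcs⟩
  intro x hx
  exact hsub (mem_insert_of_mem _ (mem_insert_of_mem _ hx))


/-- splitting a section flag below a member face. -/
lemma IC0.split_low {F G : α} {Ψ : Set α} (hΨ : IsFlagOf (Set.Icc F G) Ψ)
    {H : α} (hH : H ∈ Ψ) : IsFlagOf (Set.Icc F H) (Ψ ∩ Set.Icc F H) := by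
  have hHI := hΨ.1 hH
  refine ⟨inter_subset_right, hΨ.2.1.mono inter_subset_left, ?_⟩
  intro Ψ' hΨ's hΨ'c hsub
  have hchain : IsChain (· ≤ ·) (Ψ' ∪ Ψ) := by
    have cross : ∀ x ∈ Ψ', ∀ y ∈ Ψ, x ≤ y ∨ y ≤ x := by
      intro x hx y hy
      rcases eq_or_ne y H with rfl | hyH
      · exact Or.inl (hΨ's hx).2
      rcases hΨ.2.1.total hy hH with h | h
      · have : y ∈ Ψ' := hsub ⟨hy, (hΨ.1 hy).1, h⟩
        rcases eq_or_ne x y with rfl | hxy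
        · exact Or.inl le_rfl
        · exact hΨ'c hx this hxy
      · exact Or.inl ((hΨ's hx).2.trans h)
    intro x hx y hy hxy
    rcases hx with hx | hx <;> rcases hy with hy | hy
    · exact hΨ'c hx hy hxy
    · exact cross x hx y hy
    · exact (cross y hy x hx).symm
    · exact hΨ.2.1 hx hy hxy
  have hU : Ψ' ∪ Ψ = Ψ := by
    refine hΨ.2.2 _ ?_ hchain subset_union_right
    intro x hx
    rcases hx with hx | hx
    · exact ⟨(hΨ's hx).1, (hΨ's hx).2.trans hHI.2⟩
    · exact hΨ.1 hx
  have : Ψ' ⊆ Ψ := by rw [← hU]; exact subset_union_left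
  exact subset_antisymm (subset_inter this hΨ's) hsub

/-- splitting a section flag above a member face. -/
lemma IC0.split_high {F G : α} {Ψ : Set α} (hΨ : IsFlagOf (Set.Icc F G) Ψ)
    {H : α} (hH : H ∈ Ψ) : IsFlagOf (Set.Icc H G) (Ψ ∩ Set.Icc H G) := by
  have hHI := hΨ.1 hH
  refine ⟨inter_subset_right, hΨ.2.1.mono inter_subset_left, ?_⟩
  intro Ψ' hΨ's hΨ'c hsub
  have hchain : IsChain (· ≤ ·) (Ψ' ∪ Ψ) := by
    have cross : ∀ x ∈ Ψ', ∀ y ∈ Ψ, x ≤ y ∨ y ≤ x := by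
      intro x hx y hy
      rcases eq_or_ne y H with rfl | hyH
      · exact Or.inr (hΨ's hx).1
      rcases hΨ.2.1.total hy hH with h | h
      · exact Or.inr (h.trans (hΨ's hx).1)
      · have : y ∈ Ψ' := hsub ⟨hy, h, (hΨ.1 hy).2⟩
        rcases eq_or_ne x y with rfl | hxy
        · exact Or.inl le_rfl
        · exact hΨ'c hx this hxy
    intro x hx y hy hxy
    rcases hx with hx | hx <;> rcases hy with hy | hy
    · exact hΨ'c hx hy hxy
    · exact cross x hx y hy
    · exact (cross y hy x hx).symm
    · exact hΨ.2.1 hx hy hxy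
  have hU : Ψ' ∪ Ψ = Ψ := by
    refine hΨ.2.2 _ ?_ hchain subset_union_right
    intro x hx
    rcases hx with hx | hx
    · exact ⟨hHI.1.trans (hΨ's hx).1, (hΨ's hx).2⟩
    · exact hΨ.1 hx
  have : Ψ' ⊆ Ψ := by rw [← hU]; exact subset_union_left
  exact subset_antisymm (subset_inter this hΨ's) hsub

lemma IC0.split_union {F G : α} {Ψ : Set α} (hΨ : IsFlagOf (Set.Icc F G) Ψ)
    {H : α} (hH : H ∈ Ψ) : Ψ = (Ψ ∩ Set.Icc F H) ∪ (Ψ ∩ Set.Icc H G) := by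
  apply subset_antisymm
  · intro x hx
    rcases hΨ.2.1.total hx hH with h | h
    · exact Or.inl ⟨hx, (hΨ.1 hx).1, h⟩
    · exact Or.inr ⟨hx, h, (hΨ.1 hx).2⟩
  · exact union_subset inter_subset_left inter_subset_left

/-- gluing flags of adjoining sections. -/
lemma IC0.glue {F H G : α} (hFH : F ≤ H) (hHG : H ≤ G) {A B : Set α}
    (hA : IsFlagOf (Set.Icc F H) A) (hB : IsFlagOf (Set.Icc H G) B) :
    IsFlagOf (Set.Icc F G) (A ∪ B) := by
  have hHA : H ∈ A := (IC0.flag_mem_ends hFH hA).2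
  have hHB : H ∈ B := (IC0.flag_mem_ends hHG hB).1
  have hsubFG : A ∪ B ⊆ Set.Icc F G := by
    rintro x (hx | hx)
    · exact ⟨(hA.1 hx).1, (hA.1 hx).2.trans hHG⟩
    · exact ⟨hFH.trans (hB.1 hx).1, (hB.1 hx).2⟩
  have hchain : IsChain (· ≤ ·) (A ∪ B) := by
    intro x hx y hy hxy
    rcases hx with hx | hx <;> rcases hy with hy | hy
    · exact hA.2.1 hx hy hxy
    · exact Or.inl ((hA.1 hx).2.trans (hB.1 hy).1)
    · exact Or.inr ((hA.1 hy).2.trans (hB.1 hx).1)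
    · exact hB.2.1 hx hy hxy
  refine ⟨hsubFG, hchain, ?_⟩
  intro Ψ' hΨ's hΨ'c hsub
  have hAeq : Ψ' ∩ Set.Icc F H = A :=
    hA.2.2 _ inter_subset_right (hΨ'c.mono inter_subset_left)
      (subset_inter (subset_union_left.trans hsub) hA.1)
  have hBeq : Ψ' ∩ Set.Icc H G = B :=
    hB.2.2 _ inter_subset_right (hΨ'c.mono inter_subset_left)
      (subset_inter (subset_union_right.trans hsub) hB.1)
  apply subset_antisymm
  · intro x hx
    rcases hΨ'c.total hx (hsub (Or.inl hHA)) with h | h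
    · exact Or.inl (hAeq ▸ ⟨hx, (hΨ's hx).1, h⟩)
    · exact Or.inr (hBeq ▸ ⟨hx, h, (hΨ's hx).2⟩)
  · exact hsub

/-- lifting a flag path of the lower subsection. -/
lemma IC0.lift_low {F H G : α} (hFH : F ≤ H) (hHG : H ≤ G) {T : Set α}
    (hT : IsFlagOf (Set.Icc H G) T) {A B : Set α}
    (p : ReflTransGen (fun X Y => IsFlagOf (Set.Icc F H) X ∧ IsFlagOf (Set.Icc F H) Y ∧
      FlagAdj X Y) A B) :
    ReflTransGen (fun X Y => IsFlagOf (Set.Icc F G) X ∧ IsFlagOf (Set.Icc F G) Y ∧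
      FlagAdj X Y) (A ∪ T) (B ∪ T) := by
  induction p with
  | refl => exact .refl
  | tail _ step ih =>
    obtain ⟨hX, hY, hadj⟩ := step
    refine ih.tail ⟨IC0.glue hFH hHG hX hT, IC0.glue hFH hHG hY hT,
      IC0.flagAdj_union hadj ?_ ?_⟩
    · rintro x ⟨hx1, hx2⟩
      have : x = H := le_antisymm (hX.1 hx1).2 (hT.1 hx2).1
      exact this ▸ (IC0.flag_mem_ends hFH hY).2
    · rintro x ⟨hx1, hx2⟩
      have : x = H := le_antisymm (hY.1 hx1).2 (hT.1 hx2).1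
      exact this ▸ (IC0.flag_mem_ends hFH hX).2

/-- lifting a flag path of the upper subsection. -/
lemma IC0.lift_high {F H G : α} (hFH : F ≤ H) (hHG : H ≤ G) {T : Set α}
    (hT : IsFlagOf (Set.Icc F H) T) {A B : Set α}
    (p : ReflTransGen (fun X Y => IsFlagOf (Set.Icc H G) X ∧ IsFlagOf (Set.Icc H G) Y ∧
      FlagAdj X Y) A B) :
    ReflTransGen (fun X Y => IsFlagOf (Set.Icc F G) X ∧ IsFlagOf (Set.Icc F G) Y ∧
      FlagAdj X Y) (A ∪ T) (B ∪ T) := by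
  induction p with
  | refl => exact .refl
  | tail _ step ih =>
    obtain ⟨hX, hY, hadj⟩ := step
    have g1 := IC0.glue hFH hHG hT hX
    have g2 := IC0.glue hFH hHG hT hY
    rw [union_comm] at g1 g2
    refine ih.tail ⟨g1, g2, IC0.flagAdj_union hadj ?_ ?_⟩
    · rintro x ⟨hx1, hx2⟩
      have : x = H := le_antisymm (hT.1 hx2).2 (hX.1 hx1).1
      exact this ▸ (IC0.flag_mem_ends hHG hY).1
    · rintro x ⟨hx1, hx2⟩
      have : x = H := le_antisymm (hT.1 hx2).2 (hY.1 hx1).1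
      exact this ▸ (IC0.flag_mem_ends hHG hX).1





/-- flag-connectedness of sections of rank at most `1`. -/
lemma IC0.flagconn_small (rk_bot : rk (⊥ : α) = -1) (rk_top : rk (⊤ : α) = n)
    (hm : ∀ a b : α, a < b → rk a < rk b)
    (chain_flag : ∀ c : Set α, IsChain (· ≤ ·) c →
      ∃ Φ : Set α, c ⊆ Φ ∧ IsFlagOf Set.univ Φ ∧ Φ.ncard = (n + 2).toNat)
    (flag_rk : ∀ Φ : Set α, IsFlagOf Set.univ Φ →
      ∀ i ∈ Set.Icc (-1 : ℤ) n, ∃ a ∈ Φ, rk a = i)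
    {F G : α} (hFG : F ≤ G) (h2 : rk G - rk F ≤ 2) : FlagConnIn (Set.Icc F G) := by
  intro Φ Ψ hΦ hΨ
  have imgΦ := IC0.sec_flag_image rk_bot rk_top hm chain_flag flag_rk hFG hΦ
  have imgΨ := IC0.sec_flag_image rk_bot rk_top hm chain_flag flag_rk hFG hΨ
  obtain ⟨hFΦ, hGΦ⟩ := IC0.flag_mem_ends hFG hΦ
  obtain ⟨hFΨ, hGΨ⟩ := IC0.flag_mem_ends hFG hΨ
  have rkmemΦ : ∀ x ∈ Φ, rk F ≤ rk x ∧ rk x ≤ rk G := by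
    intro x hx
    have : rk x ∈ Set.Icc (rk F) (rk G) := imgΦ ▸ mem_image_of_mem rk hx
    exact this
  have rkmemΨ : ∀ x ∈ Ψ, rk F ≤ rk x ∧ rk x ≤ rk G := by
    intro x hx
    have : rk x ∈ Set.Icc (rk F) (rk G) := imgΨ ▸ mem_image_of_mem rk hx
    exact this
  have keyΦ : ∀ x ∈ Φ, ∀ y ∈ Φ, rk x = rk y → x = y :=
    fun x hx y hy h => IC0.rk_injOn hm hΦ.2.1 hx hy h
  have keyΨ : ∀ x ∈ Ψ, ∀ y ∈ Ψ, rk x = rk y → x = y :=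
    fun x hx y hy h => IC0.rk_injOn hm hΨ.2.1 hx hy h
  by_cases hd : rk G - rk F ≤ 1
  · -- the two flags are equal
    have : Φ = Ψ := by
      ext x
      constructor
      · intro hx
        obtain ⟨h1, h2'⟩ := rkmemΦ x hx
        rcases eq_or_lt_of_le h1 with h | h
        · rw [keyΦ x hx F hFΦ h.symm]; exact hFΨ
        · have : rk x = rk G := by omega
          rw [keyΦ x hx G hGΦ this]; exact hGΨ
      · intro hx
        obtain ⟨h1, h2'⟩ := rkmemΨ x hx
        rcases eq_or_lt_of_le h1 with h | h
        · rw [keyΨ x hx F hFΨ h.symm]; exact hFΦ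
        · have : rk x = rk G := by omega
          rw [keyΨ x hx G hGΨ this]; exact hGΦ
    rw [this]
  · push_neg at hd
    have hdd : rk G - rk F = 2 := by omega
    have hmemΦ : rk F + 1 ∈ rk '' Φ := by rw [imgΦ]; constructor <;> omega
    have hmemΨ : rk F + 1 ∈ rk '' Ψ := by rw [imgΨ]; constructor <;> omega
    obtain ⟨h1, hh1, hrk1⟩ := hmemΦ
    obtain ⟨h2', hh2, hrk2⟩ := hmemΨ
    by_cases hee : h1 = h2'
    · have : Φ = Ψ := by
        ext x
        constructor
        · intro hx
          obtain ⟨ha, hb⟩ := rkmemΦ x hx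
          rcases eq_or_lt_of_le ha with h | h
          · rw [keyΦ x hx F hFΦ h.symm]; exact hFΨ
          · rcases eq_or_lt_of_le hb with h' | h'
            · rw [keyΦ x hx G hGΦ h']; exact hGΨ
            · have : rk x = rk h1 := by omega
              rw [keyΦ x hx h1 hh1 this, hee]; exact hh2
        · intro hx
          obtain ⟨ha, hb⟩ := rkmemΨ x hx
          rcases eq_or_lt_of_le ha with h | h
          · rw [keyΨ x hx F hFΨ h.symm]; exact hFΦ
          · rcases eq_or_lt_of_le hb with h' | h'
            · rw [keyΨ x hx G hGΨ h']; exact hGΦ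
            · have : rk x = rk h2' := by omega
              rw [keyΨ x hx h2' hh2 this, ← hee]; exact hh1
      rw [this]
    · refine Relation.ReflTransGen.single ⟨hΦ, hΨ, ?_, ?_⟩
      · have : Φ \ Ψ = {h1} := by
          ext x
          constructor
          · rintro ⟨hx, hnx⟩
            obtain ⟨ha, hb⟩ := rkmemΦ x hx
            rcases eq_or_lt_of_le ha with h | h
            · exact absurd (keyΦ x hx F hFΦ h.symm ▸ hFΨ) hnx
            · rcases eq_or_lt_of_le hb with h' | h'
              · exact absurd (keyΦ x hx G hGΦ h' ▸ hGΨ) hnx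
              · have : rk x = rk h1 := by omega
                exact keyΦ x hx h1 hh1 this
          · rintro rfl
            exact ⟨hh1, fun hc => hee (keyΨ _ hc _ hh2 (by omega))⟩
        rw [this, Set.ncard_singleton]
      · have : Ψ \ Φ = {h2'} := by
          ext x
          constructor
          · rintro ⟨hx, hnx⟩
            obtain ⟨ha, hb⟩ := rkmemΨ x hx
            rcases eq_or_lt_of_le ha with h | h
            · exact absurd (keyΨ x hx F hFΨ h.symm ▸ hFΦ) hnx
            · rcases eq_or_lt_of_le hb with h' | h'
              · exact absurd (keyΨ x hx G hGΨ h' ▸ hGΦ) hnx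
              · have : rk x = rk h2' := by omega
                exact keyΨ x hx h2' hh2 this
          · rintro rfl
            exact ⟨hh2, fun hc => hee (keyΦ _ hh1 _ hc (by omega))⟩
        rw [this, Set.ncard_singleton]


/-- forward direction: strong connectedness implies strong flag-connectedness,
by induction on the rank of the section. -/
lemma IC0.flagconn_of_conn (rk_bot : rk (⊥ : α) = -1) (rk_top : rk (⊤ : α) = n)
    (hm : ∀ a b : α, a < b → rk a < rk b)
    (chain_flag : ∀ c : Set α, IsChain (· ≤ ·) c →
      ∃ Φ : Set α, c ⊆ Φ ∧ IsFlagOf Set.univ Φ ∧ Φ.ncard = (n + 2).toNat)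
    (flag_rk : ∀ Φ : Set α, IsFlagOf Set.univ Φ →
      ∀ i ∈ Set.Icc (-1 : ℤ) n, ∃ a ∈ Φ, rk a = i)
    (hsc : ∀ F G : α, F ≤ G → (rk G - rk F - 1 ≤ 1 ∨ ConnIn F G)) :
    ∀ k : ℕ, ∀ F G : α, F ≤ G → (rk G - rk F).toNat ≤ k → FlagConnIn (Set.Icc F G) := by
  intro k
  induction k with
  | zero =>
    intro F G hFG hk
    exact IC0.flagconn_small rk_bot rk_top hm chain_flag flag_rk hFG (by omega)
  | succ k ih =>
    intro F G hFG hk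
    by_cases hsmall : rk G - rk F ≤ 2
    · exact IC0.flagconn_small rk_bot rk_top hm chain_flag flag_rk hFG hsmall
    push_neg at hsmall
    have joinB : ∀ H : α, F < H → H < G → ∀ Φ Ψ : Set α,
        IsFlagOf (Set.Icc F G) Φ → IsFlagOf (Set.Icc F G) Ψ → H ∈ Φ → H ∈ Ψ →
        Relation.ReflTransGen (fun A B => IsFlagOf (Set.Icc F G) A ∧
          IsFlagOf (Set.Icc F G) B ∧ FlagAdj A B) Φ Ψ := by
      intro H hFH hHG Φ Ψ hΦ hΨ hHΦ hHΨ
      have hrkFH : rk F < rk H := hm _ _ hFH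
      have hrkHG : rk H < rk G := hm _ _ hHG
      have h1 : (rk H - rk F).toNat ≤ k := by omega
      have h2 : (rk G - rk H).toNat ≤ k := by omega
      have pl := ih F H hFH.le h1 (Φ ∩ Set.Icc F H) (Ψ ∩ Set.Icc F H)
        (IC0.split_low hΦ hHΦ) (IC0.split_low hΨ hHΨ)
      have ph := ih H G hHG.le h2 (Φ ∩ Set.Icc H G) (Ψ ∩ Set.Icc H G)
        (IC0.split_high hΦ hHΦ) (IC0.split_high hΨ hHΨ)
      have q1 := IC0.lift_low hFH.le hHG.le (IC0.split_high hΦ hHΦ) pl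
      have q2 := IC0.lift_high hFH.le hHG.le (IC0.split_low hΨ hHΨ) ph
      rw [← IC0.split_union hΦ hHΦ] at q1
      rw [union_comm (Φ ∩ Set.Icc H G), union_comm (Ψ ∩ Set.Icc H G),
        ← IC0.split_union hΨ hHΨ] at q2
      exact q1.trans q2
    intro Φ Ψ hΦ hΨ
    have imgΦ := IC0.sec_flag_image rk_bot rk_top hm chain_flag flag_rk hFG hΦ
    have imgΨ := IC0.sec_flag_image rk_bot rk_top hm chain_flag flag_rk hFG hΨ
    have hmemΦ : rk F + 1 ∈ rk '' Φ := by rw [imgΦ]; constructor <;> omega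
    have hmemΨ : rk F + 1 ∈ rk '' Ψ := by rw [imgΨ]; constructor <;> omega
    obtain ⟨H, hHΦ, hrkH⟩ := hmemΦ
    obtain ⟨K, hKΨ, hrkK⟩ := hmemΨ
    have hFH : F < H := lt_of_le_of_ne (hΦ.1 hHΦ).1 (by intro h; rw [← h] at hrkH; omega)
    have hHG : H < G := lt_of_le_of_ne (hΦ.1 hHΦ).2 (by intro h; rw [h] at hrkH; omega)
    have hFK : F < K := lt_of_le_of_ne (hΨ.1 hKΨ).1 (by intro h; rw [← h] at hrkK; omega)
    have hKG : K < G := lt_of_le_of_ne (hΨ.1 hKΨ).2 (by intro h; rw [h] at hrkK; omega)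
    have hconn : ConnIn F G := (hsc F G hFG).resolve_left (by omega)
    have p := hconn H K hFH hHG hFK hKG
    have main : ∀ y : α, Relation.ReflTransGen
        (fun a b => F < a ∧ a < G ∧ F < b ∧ b < G ∧ (a ≤ b ∨ b ≤ a)) H y →
        ∀ Ξ : Set α, IsFlagOf (Set.Icc F G) Ξ → y ∈ Ξ →
        Relation.ReflTransGen (fun A B => IsFlagOf (Set.Icc F G) A ∧
          IsFlagOf (Set.Icc F G) B ∧ FlagAdj A B) Φ Ξ := by
      intro y hp
      induction hp with
      | refl => exact fun Ξ hΞ hHΞ => joinB H hFH hHG Φ Ξ hΦ hΞ hHΦ hHΞ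
      | @tail b c hp' st ihp =>
        obtain ⟨hFb, hbG, hFc, hcG, hcomp⟩ := st
        intro Ξ hΞ hcΞ
        have hch : IsChain (· ≤ ·) ({b, c} : Set α) := by
          intro x hx y hy hxy
          rcases hx with rfl | hx <;> rcases hy with rfl | hy
          · exact absurd rfl hxy
          · rw [mem_singleton_iff] at hy; subst hy; exact hcomp
          · rw [mem_singleton_iff] at hx; subst hx; exact hcomp.symm
          · rw [mem_singleton_iff] at hx hy; subst hx; subst hy; exact absurd rfl hxy
        have hsubI : ({b, c} : Set α) ⊆ Set.Icc F G := by
          rintro x (rfl | hx)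
          · exact ⟨hFb.le, hbG.le⟩
          · rw [mem_singleton_iff] at hx; subst hx; exact ⟨hFc.le, hcG.le⟩
        obtain ⟨Ξ', hΞ', hsub⟩ := IC0.extend_chain_sec chain_flag hFG hch hsubI
        have pb := ihp Ξ' hΞ' (hsub (Or.inl rfl))
        have pc := joinB c hFc hcG Ξ' Ξ hΞ' hΞ (hsub (Or.inr rfl)) hcΞ
        exact pb.trans pc
    exact main K p Ψ hΨ hKΨ

/-- backward direction: strong flag-connectedness implies strong connectedness. -/
lemma IC0.conn_of_flagconn (rk_bot : rk (⊥ : α) = -1) (rk_top : rk (⊤ : α) = n)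
    (hm : ∀ a b : α, a < b → rk a < rk b)
    (chain_flag : ∀ c : Set α, IsChain (· ≤ ·) c →
      ∃ Φ : Set α, c ⊆ Φ ∧ IsFlagOf Set.univ Φ ∧ Φ.ncard = (n + 2).toNat)
    (flag_rk : ∀ Φ : Set α, IsFlagOf Set.univ Φ →
      ∀ i ∈ Set.Icc (-1 : ℤ) n, ∃ a ∈ Φ, rk a = i)
    (hfc : ∀ F G : α, F ≤ G → FlagConnIn (Set.Icc F G)) :
    ∀ F G : α, F ≤ G → (rk G - rk F - 1 ≤ 1 ∨ ConnIn F G) := by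
  intro F G hFG
  by_cases hsm : rk G - rk F - 1 ≤ 1
  · exact Or.inl hsm
  push_neg at hsm
  refine Or.inr ?_
  intro H K hFH hHG hFK hKG
  have hchH : IsChain (· ≤ ·) ({H} : Set α) := Set.Subsingleton.isChain subsingleton_singleton
  have hchK : IsChain (· ≤ ·) ({K} : Set α) := Set.Subsingleton.isChain subsingleton_singleton
  obtain ⟨Φ, hΦ, hHΦ⟩ := IC0.extend_chain_sec chain_flag hFG hchH
    (by rw [singleton_subset_iff]; exact ⟨hFH.le, hHG.le⟩)
  obtain ⟨Ψ, hΨ, hKΨ⟩ := IC0.extend_chain_sec chain_flag hFG hchK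
    (by rw [singleton_subset_iff]; exact ⟨hFK.le, hKG.le⟩)
  have hHΦ' : H ∈ Φ := hHΦ rfl
  have hKΨ' : K ∈ Ψ := hKΨ rfl
  have p := hfc F G hFG Φ Ψ hΦ hΨ
  have main : IsFlagOf (Set.Icc F G) Φ → ∀ a ∈ Φ, F < a → a < G →
      Relation.ReflTransGen
        (fun a b => F < a ∧ a < G ∧ F < b ∧ b < G ∧ (a ≤ b ∨ b ≤ a)) a K := by
    refine Relation.ReflTransGen.head_induction_on
      (motive := fun X _ => IsFlagOf (Set.Icc F G) X → ∀ a ∈ X, F < a → a < G →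
        Relation.ReflTransGen
          (fun a b => F < a ∧ a < G ∧ F < b ∧ b < G ∧ (a ≤ b ∨ b ≤ a)) a K) p ?_ ?_
    · intro _ a ha hFa haG
      rcases eq_or_ne a K with rfl | hane
      · exact Relation.ReflTransGen.refl
      · exact Relation.ReflTransGen.single ⟨hFa, haG, hFK, hKG, hΨ.2.1 ha hKΨ' hane⟩
    · rintro X Y ⟨hX, hY, hadj⟩ hpath ihY _ a ha hFa haG
      by_cases hay : a ∈ Y
      · exact ihY hY a hay hFa haG
      · obtain ⟨d, hd⟩ := Set.ncard_eq_one.mp hadj.1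
        have had : a = d := by
          have : a ∈ X \ Y := ⟨ha, hay⟩
          rwa [hd, mem_singleton_iff] at this
        have imgX := IC0.sec_flag_image rk_bot rk_top hm chain_flag flag_rk hFG hX
        have hm1 : rk F + 1 ∈ rk '' X := by rw [imgX]; constructor <;> omega
        have hm2 : rk F + 2 ∈ rk '' X := by rw [imgX]; constructor <;> omega
        obtain ⟨x1, hx1, hrk1⟩ := hm1
        obtain ⟨x2, hx2, hrk2⟩ := hm2
        obtain ⟨c, hcX, hrkc1, hrkc2⟩ : ∃ c ∈ X, rk F < rk c ∧ rk c < rk G ∧ c ≠ d := by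
          rcases eq_or_ne x1 d with rfl | hne
          · exact ⟨x2, hx2, by omega, by omega, fun h => by rw [h] at hrk2; omega⟩
          · exact ⟨x1, hx1, by omega, by omega, hne⟩
        obtain ⟨hrkc2, hcd⟩ := hrkc2
        have hcY : c ∈ Y := by
          by_contra hcn
          have : c ∈ X \ Y := ⟨hcX, hcn⟩
          rw [hd, mem_singleton_iff] at this
          exact hcd this
        have hFc : F < c := lt_of_le_of_ne (hX.1 hcX).1
          (by intro h; rw [← h] at hrkc1; omega)
        have hcG : c < G := lt_of_le_of_ne (hX.1 hcX).2
          (by intro h; rw [h] at hrkc2; omega)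
        have hac : a ≤ c ∨ c ≤ a := by
          rcases eq_or_ne a c with rfl | hane
          · exact Or.inl le_rfl
          · exact hX.2.1 ha hcX hane
        exact (Relation.ReflTransGen.single ⟨hFa, haG, hFc, hcG, hac⟩).trans
          (ihY hY c hcY hFc hcG)
  exact main hΦ H hHΦ' hFH hHG


end IC0

/-- For a ranked bounded poset of rank `n` in which every chain is
contained in a flag (with `n+2` elements, one of each rank), strong connectedness
is equivalent to strong flag-connectedness. -/
theorem strongly_connected_iff_strongly_flag_connected
    {α : Type*} [PartialOrder α] [BoundedOrder α] (n : ℤ) (rk : α → ℤ)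
    (rk_bot : rk (⊥ : α) = -1) (rk_top : rk (⊤ : α) = n)
    (rk_strictMono : ∀ a b : α, a < b → rk a < rk b)
    (chain_flag : ∀ c : Set α, IsChain (· ≤ ·) c →
      ∃ Φ : Set α, c ⊆ Φ ∧ IsFlagOf Set.univ Φ ∧ Φ.ncard = (n + 2).toNat)
    (flag_rk : ∀ Φ : Set α, IsFlagOf Set.univ Φ →
      ∀ i ∈ Set.Icc (-1 : ℤ) n, ∃ a ∈ Φ, rk a = i) :
    (∀ F G : α, F ≤ G → (rk G - rk F - 1 ≤ 1 ∨ ConnIn F G)) ↔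
      (∀ F G : α, F ≤ G → FlagConnIn (Set.Icc F G)) := by
  constructor
  · intro hsc F G hFG
    exact IC0.flagconn_of_conn rk_bot rk_top rk_strictMono chain_flag flag_rk hsc
      (rk G - rk F).toNat F G hFG le_rfl
  · intro hfc
    exact IC0.conn_of_flagconn rk_bot rk_top rk_strictMono chain_flag flag_rk hfc
end

section
/- Let K be a regular incidence complex of rank n ≥ 1 with flag-transitive automorphism subgroup Γ and distinguished generating subgroups R_{-1}, R_0, ..., R_n with respect to a base flag Φ. Then Γ = ⟨R_0, ..., R_{n-1}⟩. -/
open Set Pointwise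

section ICBasics

variable {α : Type*} [PartialOrder α] [BoundedOrder α] {n : ℤ} {rk : α → ℤ}

namespace ICAux

lemma chain_lt (hK : IncComplex α n rk) {C : Set α} (hC : IsChain (· ≤ ·) C)
    {x y : α} (hx : x ∈ C) (hy : y ∈ C) (h : rk x < rk y) : x < y := by
  have hne : x ≠ y := fun e => by simp [e] at h
  rcases hC hx hy hne with h1 | h1
  · exact lt_of_le_of_ne h1 hne
  · rcases lt_or_eq_of_le h1 with h2 | h2
    · exact absurd (hK.rk_strictMono _ _ h2) (by omega)
    · exact absurd h2 hne.symm

lemma chain_rk_eq (hK : IncComplex α n rk) {C : Set α} (hC : IsChain (· ≤ ·) C)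
    {x y : α} (hx : x ∈ C) (hy : y ∈ C) (h : rk x = rk y) : x = y := by
  by_contra hne
  rcases hC hx hy hne with h1 | h1
  · exact absurd (hK.rk_strictMono _ _ (lt_of_le_of_ne h1 hne)) (by omega)
  · exact absurd (hK.rk_strictMono _ _ (lt_of_le_of_ne h1 (Ne.symm hne))) (by omega)

lemma chain_le (hK : IncComplex α n rk) {C : Set α} (hC : IsChain (· ≤ ·) C)
    {x y : α} (hx : x ∈ C) (hy : y ∈ C) (h : rk x ≤ rk y) : x ≤ y := by
  rcases lt_or_eq_of_le h with h1 | h1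
  · exact (chain_lt hK hC hx hy h1).le
  · exact (chain_rk_eq hK hC hx hy h1).le

lemma rk_mem (hK : IncComplex α n rk) (a : α) : rk a ∈ Set.Icc (-1 : ℤ) n := by
  constructor
  · rcases eq_or_lt_of_le (bot_le : (⊥ : α) ≤ a) with h | h
    · rw [← h, hK.rk_bot]
    · have := hK.rk_strictMono _ _ h; rw [hK.rk_bot] at this; omega
  · rcases eq_or_lt_of_le (le_top : a ≤ (⊤ : α)) with h | h
    · rw [h, hK.rk_top]
    · have := hK.rk_strictMono _ _ h; rw [hK.rk_top] at this; omega

lemma bot_mem (hΦ : IsFlagOf Set.univ Φ) : (⊥ : α) ∈ Φ := by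
  have h := hΦ.2.2 (insert ⊥ Φ) (Set.subset_univ _)
    (hΦ.2.1.insert (fun b _ _ => Or.inl bot_le)) (Set.subset_insert _ _)
  rw [← h]; exact Set.mem_insert _ _

lemma top_mem (hΦ : IsFlagOf Set.univ Φ) : (⊤ : α) ∈ Φ := by
  have h := hΦ.2.2 (insert ⊤ Φ) (Set.subset_univ _)
    (hΦ.2.1.insert (fun b _ _ => Or.inr le_top)) (Set.subset_insert _ _)
  rw [← h]; exact Set.mem_insert _ _

lemma exists_flag (hK : IncComplex α n rk) {C : Set α} (hC : IsChain (· ≤ ·) C) :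
    ∃ Φ : Set α, C ⊆ Φ ∧ IsFlagOf Set.univ Φ := by
  obtain ⟨Φ, h1, h2, _⟩ := hK.chain_flag C hC
  exact ⟨Φ, h1, h2⟩

lemma flag_of_ranks (hK : IncComplex α n rk) {C : Set α} (hC : IsChain (· ≤ ·) C)
    (h : ∀ i ∈ Set.Icc (-1 : ℤ) n, ∃ x ∈ C, rk x = i) : IsFlagOf Set.univ C := by
  obtain ⟨Φ, hsub, hΦ⟩ := exists_flag hK hC
  have : C = Φ := by
    apply Set.Subset.antisymm hsub
    intro a ha
    obtain ⟨x, hxC, hxrk⟩ := h (rk a) (rk_mem hK a)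
    exact chain_rk_eq hK hΦ.2.1 (hsub hxC) ha hxrk ▸ hxC
  rw [this]; exact hΦ

lemma flag_image (g : α ≃o α) {Φ : Set α} (hΦ : IsFlagOf Set.univ Φ) :
    IsFlagOf Set.univ (⇑g '' Φ) := by
  refine ⟨Set.subset_univ _, hΦ.2.1.image_of_map_rel _ _ _ (fun x y h => g.le_iff_le.2 h), ?_⟩
  intro Ψ _ hΨch hsub
  have hsub' : Φ ⊆ ⇑g.symm '' Ψ := by
    intro x hx
    exact ⟨g x, hsub ⟨x, hx, rfl⟩, g.symm_apply_apply x⟩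
  have := hΦ.2.2 (⇑g.symm '' Ψ) (Set.subset_univ _)
    (hΨch.image_of_map_rel _ _ _ (fun x y h => g.symm.le_iff_le.2 h)) hsub'
  have h2 : ⇑g '' (⇑g.symm '' Ψ) = ⇑g '' Φ := by rw [this]
  simpa [Set.image_image] using h2

lemma rk_le_apply (hK : IncComplex α n rk) (g : α ≃o α) (a : α) : rk a ≤ rk (g a) := by
  suffices H : ∀ m : ℕ, ∀ a : α, (rk a + 1).toNat ≤ m → rk a ≤ rk (g a) from H _ a le_rfl
  intro m
  induction m with
  | zero =>
    intro a ha
    have h1 := (rk_mem hK a).1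
    have h2 := (rk_mem hK (g a)).1
    omega
  | succ m ih =>
    intro a ha
    rcases eq_or_lt_of_le (rk_mem hK a).1 with h | h
    · have := (rk_mem hK (g a)).1; omega
    · obtain ⟨Φ, hsub, hΦ⟩ := exists_flag hK (Set.Subsingleton.isChain (Set.subsingleton_singleton (a := a)))
      have haΦ : a ∈ Φ := hsub rfl
      obtain ⟨b, hbΦ, hbrk⟩ := hK.flag_rk Φ hΦ (rk a - 1)
        ⟨by omega, by have := (rk_mem hK a).2; omega⟩
      have hba : b < a := chain_lt hK hΦ.2.1 hbΦ haΦ (by omega)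
      have hb := ih b (by have := (rk_mem hK b).1; omega)
      have := hK.rk_strictMono _ _ (g.lt_iff_lt.2 hba)
      omega

lemma rk_apply (hK : IncComplex α n rk) (g : α ≃o α) (a : α) : rk (g a) = rk a := by
  have h1 := rk_le_apply hK g a
  have h2 := rk_le_apply hK g.symm (g a)
  rw [g.symm_apply_apply] at h2
  omega

end ICAux
end ICBasics
section ICConn
variable {α : Type*} [PartialOrder α] [BoundedOrder α] {n : ℤ} {rk : α → ℤ}
namespace ICAux

/-- The step relation for flag adjacency paths. -/
def Step {α : Type*} [PartialOrder α] (A B : Set α) : Prop :=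
  IsFlagOf Set.univ A ∧ IsFlagOf Set.univ B ∧ FlagAdj A B

lemma outside_le {C : Set α} (hC : IsChain (· ≤ ·) C) {E G x : α}
    (hE : E ∈ C) (hG : G ∈ C) (hx : x ∈ C) (hnot : x ∉ Set.Ioo E G) :
    x ≤ E ∨ G ≤ x := by
  by_cases hxE : x = E
  · exact Or.inl hxE.le
  by_cases hxG : x = G
  · exact Or.inr hxG.ge
  rcases hC hx hE hxE with h1 | h1
  · exact Or.inl h1
  · have hEx : E < x := lt_of_le_of_ne h1 (Ne.symm hxE)
    have hxltG : ¬ x < G := fun h => hnot ⟨hEx, h⟩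
    rcases hC hx hG hxG with h2 | h2
    · exact absurd (lt_of_le_of_ne h2 hxG) hxltG
    · exact Or.inr h2

lemma not_mem_Ioo_of {E G x : α} (h : x ≤ E ∨ G ≤ x) : x ∉ Set.Ioo E G := by
  rintro ⟨h1, h2⟩
  rcases h with h | h
  · exact absurd (h1.trans_le h) (lt_irrefl _)
  · exact absurd (h2.trans_le h) (lt_irrefl _)

/-- Gluing two flags along a common pair `b ≤ G`. -/
lemma glue_flag (hK : IncComplex α n rk) {X Y : Set α}
    (hX : IsFlagOf Set.univ X) (hY : IsFlagOf Set.univ Y) {b G : α}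
    (hbX : b ∈ X) (hGX : G ∈ X) (hbY : b ∈ Y) (hGY : G ∈ Y) :
    IsFlagOf Set.univ ((X \ Set.Ioo b G) ∪ (Y ∩ Set.Ioo b G)) := by
  have hchain : IsChain (· ≤ ·) ((X \ Set.Ioo b G) ∪ (Y ∩ Set.Ioo b G)) := by
    intro x hx y hy hne
    rcases hx with ⟨hx1, hx2⟩ | ⟨hx1, hx2⟩ <;> rcases hy with ⟨hy1, hy2⟩ | ⟨hy1, hy2⟩
    · exact hX.2.1 hx1 hy1 hne
    · rcases outside_le hX.2.1 hbX hGX hx1 hx2 with h | h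
      · exact Or.inl (h.trans hy2.1.le)
      · exact Or.inr (hy2.2.le.trans h)
    · rcases outside_le hX.2.1 hbX hGX hy1 hy2 with h | h
      · exact Or.inr (h.trans hx2.1.le)
      · exact Or.inl (hx2.2.le.trans h)
    · exact hY.2.1 hx1 hy1 hne
  apply flag_of_ranks hK hchain
  intro i hi
  by_cases hib : i ≤ rk b
  · obtain ⟨x, hxX, hxrk⟩ := hK.flag_rk X hX i hi
    refine ⟨x, Or.inl ⟨hxX, not_mem_Ioo_of (Or.inl ?_)⟩, hxrk⟩
    exact chain_le hK hX.2.1 hxX hbX (by omega)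
  by_cases hiG : rk G ≤ i
  · obtain ⟨x, hxX, hxrk⟩ := hK.flag_rk X hX i hi
    refine ⟨x, Or.inl ⟨hxX, not_mem_Ioo_of (Or.inr ?_)⟩, hxrk⟩
    exact chain_le hK hX.2.1 hGX hxX (by omega)
  · obtain ⟨x, hxY, hxrk⟩ := hK.flag_rk Y hY i hi
    refine ⟨x, Or.inr ⟨hxY, ⟨?_, ?_⟩⟩, hxrk⟩
    · exact chain_lt hK hY.2.1 hbY hxY (by omega)
    · exact chain_lt hK hY.2.1 hxY hGY (by omega)

/-- Outside part at `(B,G)` in terms of the outside part at `(E,G)` when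
`rk B = rk E + 1`. -/
lemma outside_succ (hK : IncComplex α n rk) {X : Set α} (hX : IsFlagOf Set.univ X)
    {E B G : α} (hEX : E ∈ X) (hBX : B ∈ X) (hGX : G ∈ X) (hB : rk B = rk E + 1) :
    X \ Set.Ioo B G = (X \ Set.Ioo E G) ∪ {B} := by
  have hEB : E < B := chain_lt hK hX.2.1 hEX hBX (by omega)
  apply Set.Subset.antisymm
  · rintro x ⟨hx1, hx2⟩
    rcases outside_le hX.2.1 hBX hGX hx1 hx2 with h | h
    · rcases eq_or_lt_of_le h with h' | h'
      · exact Or.inr h'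
      · have : rk x < rk B := hK.rk_strictMono _ _ h'
        have : x ≤ E := chain_le hK hX.2.1 hx1 hEX (by omega)
        exact Or.inl ⟨hx1, not_mem_Ioo_of (Or.inl this)⟩
    · exact Or.inl ⟨hx1, not_mem_Ioo_of (Or.inr h)⟩
  · rintro x (⟨hx1, hx2⟩ | hx)
    · refine ⟨hx1, not_mem_Ioo_of ?_⟩
      rcases outside_le hX.2.1 hEX hGX hx1 hx2 with h | h
      · exact Or.inl (h.trans hEB.le)
      · exact Or.inr h
    · rw [Set.mem_singleton_iff] at hx
      subst hx
      exact ⟨hBX, not_mem_Ioo_of (Or.inl le_rfl)⟩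

end ICAux
end ICConn
section ICConn2
variable {α : Type*} [PartialOrder α] [BoundedOrder α] {n : ℤ} {rk : α → ℤ}
namespace ICAux

lemma flag_conn_aux (hK : IncComplex α n rk) :
    ∀ k : ℕ, ∀ E G : α, E ≤ G → (rk G - rk E).toNat ≤ k →
    ∀ Φ Ψ : Set α, IsFlagOf Set.univ Φ → IsFlagOf Set.univ Ψ →
    E ∈ Φ → G ∈ Φ → E ∈ Ψ → G ∈ Ψ →
    Φ \ Set.Ioo E G = Ψ \ Set.Ioo E G →
    Relation.ReflTransGen Step Φ Ψ := by
  intro k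
  induction k with
  | zero =>
    intro E G hEG hd Φ Ψ hΦ hΨ _ _ _ _ hout
    have hEG' : E = G := by
      rcases eq_or_lt_of_le hEG with h | h
      · exact h
      · exact absurd (hK.rk_strictMono _ _ h) (by omega)
    subst hEG'
    rw [Set.Ioo_self, Set.diff_empty, Set.diff_empty] at hout
    rw [hout]
  | succ k ih =>
    intro E G hEG hd Φ Ψ hΦ hΨ hEΦ hGΦ hEΨ hGΨ hout
    rcases eq_or_lt_of_le hEG with rfl | hlt
    · rw [Set.Ioo_self, Set.diff_empty, Set.diff_empty] at hout; rw [hout]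
    have hrklt : rk E < rk G := hK.rk_strictMono _ _ hlt
    by_cases hd1 : rk G = rk E + 1
    · have hIoo : Set.Ioo E G = (∅ : Set α) := by
        ext x
        simp only [Set.mem_Ioo, Set.mem_empty_iff_false, iff_false, not_and]
        intro h1 h2
        have := hK.rk_strictMono _ _ h1
        have := hK.rk_strictMono _ _ h2
        omega
      rw [hIoo, Set.diff_empty, Set.diff_empty] at hout; rw [hout]
    have hE1 : rk E + 1 ∈ Set.Icc (-1 : ℤ) n := by
      have := (rk_mem hK E).1; have := (rk_mem hK G).2; constructor <;> omega
    obtain ⟨A, hAΦ, hArk⟩ := hK.flag_rk Φ hΦ (rk E + 1) hE1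
    obtain ⟨B, hBΨ, hBrk⟩ := hK.flag_rk Ψ hΨ (rk E + 1) hE1
    have hAI : A ∈ Set.Ioo E G := ⟨chain_lt hK hΦ.2.1 hEΦ hAΦ (by omega),
      chain_lt hK hΦ.2.1 hAΦ hGΦ (by omega)⟩
    have hBI : B ∈ Set.Ioo E G := ⟨chain_lt hK hΨ.2.1 hEΨ hBΨ (by omega),
      chain_lt hK hΨ.2.1 hBΨ hGΨ (by omega)⟩
    by_cases hd2 : rk G = rk E + 2
    · -- the two flags are equal or adjacent
      have hΦI : ∀ x ∈ Φ, x ∈ Set.Ioo E G → x = A := by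
        intro x hx hxI
        have h1 := hK.rk_strictMono _ _ hxI.1
        have h2 := hK.rk_strictMono _ _ hxI.2
        exact chain_rk_eq hK hΦ.2.1 hx hAΦ (by omega)
      have hΨI : ∀ x ∈ Ψ, x ∈ Set.Ioo E G → x = B := by
        intro x hx hxI
        have h1 := hK.rk_strictMono _ _ hxI.1
        have h2 := hK.rk_strictMono _ _ hxI.2
        exact chain_rk_eq hK hΨ.2.1 hx hBΨ (by omega)
      by_cases hAB : A = B
      · have hΦΨ : Φ = Ψ := by
          apply Set.Subset.antisymm <;> intro x hx
          · by_cases hxI : x ∈ Set.Ioo E G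
            · rw [hΦI x hx hxI, hAB]; exact hBΨ
            · have hx' : x ∈ Ψ \ Set.Ioo E G := by rw [← hout]; exact ⟨hx, hxI⟩
              exact hx'.1
          · by_cases hxI : x ∈ Set.Ioo E G
            · rw [hΨI x hx hxI, ← hAB]; exact hAΦ
            · have hx' : x ∈ Φ \ Set.Ioo E G := by rw [hout]; exact ⟨hx, hxI⟩
              exact hx'.1
        rw [hΦΨ]
      · apply Relation.ReflTransGen.single
        have h1 : Φ \ Ψ = {A} := by
          apply Set.Subset.antisymm
          · rintro x ⟨hx1, hx2⟩
            by_cases hxI : x ∈ Set.Ioo E G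
            · exact hΦI x hx1 hxI
            · have hx' : x ∈ Ψ \ Set.Ioo E G := by rw [← hout]; exact ⟨hx1, hxI⟩
              exact absurd hx'.1 hx2
          · intro x hx
            rw [Set.mem_singleton_iff] at hx; rw [hx]
            exact ⟨hAΦ, fun hA => hAB (hΨI A hA hAI)⟩
        have h2 : Ψ \ Φ = {B} := by
          apply Set.Subset.antisymm
          · rintro x ⟨hx1, hx2⟩
            by_cases hxI : x ∈ Set.Ioo E G
            · exact hΨI x hx1 hxI
            · have hx' : x ∈ Φ \ Set.Ioo E G := by rw [hout]; exact ⟨hx1, hxI⟩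
              exact absurd hx'.1 hx2
          · intro x hx
            rw [Set.mem_singleton_iff] at hx; rw [hx]
            exact ⟨hBΨ, fun hB => hAB (hΦI B hB hBI).symm⟩
        exact ⟨hΦ, hΨ, by rw [h1]; exact Set.ncard_singleton A,
          by rw [h2]; exact Set.ncard_singleton B⟩
    -- main case : rk G ≥ rk E + 3
    have hconn := hK.strong_conn E G hEG (by omega) A B hAI.1 hAI.2 hBI.1 hBI.2
    have key : ∀ H : α, Relation.ReflTransGen
        (fun a b => E < a ∧ a < G ∧ E < b ∧ b < G ∧ (a ≤ b ∨ b ≤ a)) A H →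
        ∃ Θ : Set α, IsFlagOf Set.univ Θ ∧ H ∈ Θ ∧
          Θ \ Set.Ioo E G = Φ \ Set.Ioo E G ∧ Relation.ReflTransGen Step Φ Θ := by
      intro H hpath
      induction hpath with
      | refl => exact ⟨Φ, hΦ, hAΦ, rfl, Relation.ReflTransGen.refl⟩
      | @tail b c _ hbc ihp =>
        obtain ⟨Θ, hΘ, hbΘ, hΘout, hΘpath⟩ := ihp
        obtain ⟨hEb, hbG, hEc, hcG, hbc'⟩ := hbc
        have hEΘ : E ∈ Θ := by
          have h : E ∈ Φ \ Set.Ioo E G := ⟨hEΦ, fun h => absurd h.1 (lt_irrefl E)⟩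
          rw [← hΘout] at h; exact h.1
        have hGΘ : G ∈ Θ := by
          have h : G ∈ Φ \ Set.Ioo E G := ⟨hGΦ, fun h => absurd h.2 (lt_irrefl G)⟩
          rw [← hΘout] at h; exact h.1
        set C : Set α := (Φ \ Set.Ioo E G) ∪ {b, c} with hC
        have memIoo : ∀ z ∈ ({b, c} : Set α), E < z ∧ z < G := by
          rintro z (rfl | rfl)
          exacts [⟨hEb, hbG⟩, ⟨hEc, hcG⟩]
        have hCchain : IsChain (· ≤ ·) C := by
          intro x hx y hy hne
          rcases hx with hx | hx <;> rcases hy with hy | hy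
          · exact hΦ.2.1 hx.1 hy.1 hne
          · rcases outside_le hΦ.2.1 hEΦ hGΦ hx.1 hx.2 with h | h
            · exact Or.inl (h.trans (memIoo y hy).1.le)
            · exact Or.inr ((memIoo y hy).2.le.trans h)
          · rcases outside_le hΦ.2.1 hEΦ hGΦ hy.1 hy.2 with h | h
            · exact Or.inr (h.trans (memIoo x hx).1.le)
            · exact Or.inl ((memIoo x hx).2.le.trans h)
          · rcases hx with rfl | rfl <;> rcases hy with rfl | rfl
            · exact absurd rfl hne
            · exact hbc'
            · exact hbc'.symm
            · exact absurd rfl hne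
        obtain ⟨Θ', hsub', hΘ'⟩ := exists_flag hK hCchain
        have hbΘ' : b ∈ Θ' := hsub' (Or.inr (Set.mem_insert _ _))
        have hcΘ' : c ∈ Θ' := hsub' (Or.inr (Set.mem_insert_of_mem _ rfl))
        have houtsub : Φ \ Set.Ioo E G ⊆ Θ' := fun x hx => hsub' (Or.inl hx)
        have hEΘ' : E ∈ Θ' := houtsub ⟨hEΦ, fun h => absurd h.1 (lt_irrefl E)⟩
        have hGΘ' : G ∈ Θ' := houtsub ⟨hGΦ, fun h => absurd h.2 (lt_irrefl G)⟩
        have hΘ'out : Θ' \ Set.Ioo E G = Φ \ Set.Ioo E G := by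
          apply Set.Subset.antisymm
          · rintro x ⟨hx1, hx2⟩
            obtain ⟨y, hyΦ, hyrk⟩ := hK.flag_rk Φ hΦ (rk x) (rk_mem hK x)
            have hyout : y ∈ Φ \ Set.Ioo E G := by
              refine ⟨hyΦ, fun hyI => ?_⟩
              have h1 := hK.rk_strictMono _ _ hyI.1
              have h2 := hK.rk_strictMono _ _ hyI.2
              rcases outside_le hΘ'.2.1 hEΘ' hGΘ' hx1 hx2 with h | h
              · rcases eq_or_lt_of_le h with h' | h'
                · rw [h'] at hyrk; omega
                · have := hK.rk_strictMono _ _ h'; omega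
              · rcases eq_or_lt_of_le h with h' | h'
                · rw [← h'] at hyrk; omega
                · have := hK.rk_strictMono _ _ h'; omega
            have : x = y := chain_rk_eq hK hΘ'.2.1 hx1 (houtsub hyout) hyrk.symm
            rw [this]; exact hyout
          · rintro x hx
            exact ⟨houtsub hx, hx.2⟩
        have hrkb1 : rk E < rk b := hK.rk_strictMono _ _ hEb
        have hrkb2 : rk b < rk G := hK.rk_strictMono _ _ hbG
        set Λ : Set α := (Θ \ Set.Ioo b G) ∪ (Θ' ∩ Set.Ioo b G) with hΛ
        have hΛflag := glue_flag hK hΘ hΘ' hbΘ hGΘ hbΘ' hGΘ'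
        have hbΛ : b ∈ Λ := Or.inl ⟨hbΘ, fun h => absurd h.1 (lt_irrefl b)⟩
        have hGΛ : G ∈ Λ := Or.inl ⟨hGΘ, fun h => absurd h.2 (lt_irrefl G)⟩
        have hEΛ : E ∈ Λ := Or.inl ⟨hEΘ, not_mem_Ioo_of (Or.inl hEb.le)⟩
        have step1 : Relation.ReflTransGen Step Θ Λ := by
          apply ih b G hbG.le (by omega) Θ Λ hΘ hΛflag hbΘ hGΘ hbΛ hGΛ
          ext x
          constructor
          · rintro ⟨hx1, hx2⟩; exact ⟨Or.inl ⟨hx1, hx2⟩, hx2⟩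
          · rintro ⟨hx1 | hx1, hx2⟩
            · exact hx1
            · exact absurd hx1.2 hx2
        have step2 : Relation.ReflTransGen Step Λ Θ' := by
          apply ih E b hEb.le (by omega) Λ Θ' hΛflag hΘ' hEΛ hbΛ hEΘ' hbΘ'
          apply Set.Subset.antisymm
          · rintro x ⟨hx1, hx2⟩
            refine ⟨?_, hx2⟩
            rcases hx1 with ⟨hx1, hx3⟩ | ⟨hx1, hx3⟩
            · rcases outside_le hΘ.2.1 hEΘ hbΘ hx1 hx2 with h | h
              · have hxf : x ∈ Φ \ Set.Ioo E G := by
                  rw [← hΘout]; exact ⟨hx1, not_mem_Ioo_of (Or.inl h)⟩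
                exact houtsub hxf
              · rcases outside_le hΘ.2.1 hbΘ hGΘ hx1 hx3 with h2 | h2
                · have : x = b := le_antisymm h2 h
                  rw [this]; exact hbΘ'
                · have hxf : x ∈ Φ \ Set.Ioo E G := by
                    rw [← hΘout]; exact ⟨hx1, not_mem_Ioo_of (Or.inr h2)⟩
                  exact houtsub hxf
            · exact hx1
          · rintro x ⟨hx1, hx2⟩
            refine ⟨?_, hx2⟩
            rcases outside_le hΘ'.2.1 hEΘ' hbΘ' hx1 hx2 with h | h
            · have hxf : x ∈ Φ \ Set.Ioo E G := by
                rw [← hΘ'out]; exact ⟨hx1, not_mem_Ioo_of (Or.inl h)⟩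
              have hxΘ : x ∈ Θ := by rw [← hΘout] at hxf; exact hxf.1
              exact Or.inl ⟨hxΘ, not_mem_Ioo_of (Or.inl (h.trans hEb.le))⟩
            · rcases eq_or_lt_of_le h with h' | h'
              · rw [← h']
                exact Or.inl ⟨hbΘ, fun hh => absurd hh.1 (lt_irrefl b)⟩
              · by_cases hxG : x < G
                · exact Or.inr ⟨hx1, h', hxG⟩
                · have hxf : x ∈ Φ \ Set.Ioo E G := by
                    rw [← hΘ'out]; exact ⟨hx1, fun hh => hxG hh.2⟩
                  have hxΘ : x ∈ Θ := by rw [← hΘout] at hxf; exact hxf.1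
                  exact Or.inl ⟨hxΘ, fun hh => hxG hh.2⟩
        exact ⟨Θ', hΘ', hcΘ', hΘ'out, hΘpath.trans (step1.trans step2)⟩
    obtain ⟨Θ, hΘ, hBΘ, hΘout, hpath⟩ := key B hconn
    have hEΘ : E ∈ Θ := by
      have h : E ∈ Φ \ Set.Ioo E G := ⟨hEΦ, fun h => absurd h.1 (lt_irrefl E)⟩
      rw [← hΘout] at h; exact h.1
    have hGΘ : G ∈ Θ := by
      have h : G ∈ Φ \ Set.Ioo E G := ⟨hGΦ, fun h => absurd h.2 (lt_irrefl G)⟩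
      rw [← hΘout] at h; exact h.1
    have hfin : Relation.ReflTransGen Step Θ Ψ := by
      apply ih B G hBI.2.le (by omega) Θ Ψ hΘ hΨ hBΘ hGΘ hBΨ hGΨ
      rw [outside_succ hK hΘ hEΘ hBΘ hGΘ (by omega),
        outside_succ hK hΨ hEΨ hBΨ hGΨ (by omega), hΘout, hout]
    exact hpath.trans hfin

end ICAux
end ICConn2
section ICMain
variable {α : Type*} [PartialOrder α] [BoundedOrder α] {n : ℤ} {rk : α → ℤ}
namespace ICAux

lemma adj_rk_eq (hK : IncComplex α n rk) {Θ Ψ : Set α} {c d : α}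
    (hΘ : IsFlagOf Set.univ Θ) (hΨ : IsFlagOf Set.univ Ψ)
    (hc : Θ \ Ψ = {c}) (hd : Ψ \ Θ = {d}) : rk c = rk d := by
  have hcΘ : c ∈ Θ \ Ψ := by rw [hc]; rfl
  have hdΨ : d ∈ Ψ \ Θ := by rw [hd]; rfl
  by_contra hne
  obtain ⟨x, hxΘ, hxrk⟩ := hK.flag_rk Θ hΘ (rk d) (rk_mem hK d)
  have hxc : x ≠ c := fun e => hne (by rw [← e, hxrk])
  have hxΨ : x ∈ Ψ := by
    by_contra hxΨ
    have : x ∈ Θ \ Ψ := ⟨hxΘ, hxΨ⟩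
    rw [hc] at this
    exact hxc this
  have : x = d := chain_rk_eq hK hΨ.2.1 hxΨ hdΨ.1 hxrk
  rw [this] at hxΘ
  exact hdΨ.2 hxΘ

lemma outside_bot_top (hΦ : IsFlagOf Set.univ Φ) :
    Φ \ Set.Ioo (⊥ : α) ⊤ = {⊥, ⊤} := by
  apply Set.Subset.antisymm
  · rintro x ⟨hx1, hx2⟩
    by_cases hb : x = ⊥
    · exact Or.inl hb
    by_cases ht : x = ⊤
    · exact Or.inr ht
    exact absurd ⟨bot_lt_iff_ne_bot.2 hb, lt_top_iff_ne_top.2 ht⟩ hx2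
  · rintro x (rfl | rfl)
    · exact ⟨bot_mem hΦ, fun h => absurd h.1 (lt_irrefl _)⟩
    · exact ⟨top_mem hΦ, fun h => absurd h.2 (lt_irrefl _)⟩

lemma flags_connected (hK : IncComplex α n rk) {Φ Ψ : Set α}
    (hΦ : IsFlagOf Set.univ Φ) (hΨ : IsFlagOf Set.univ Ψ) :
    Relation.ReflTransGen Step Φ Ψ := by
  apply flag_conn_aux hK ((rk (⊤ : α) - rk (⊥ : α)).toNat) ⊥ ⊤ bot_le le_rfl Φ Ψ hΦ hΨ
    (bot_mem hΦ) (top_mem hΦ) (bot_mem hΨ) (top_mem hΨ)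
  rw [outside_bot_top hΦ, outside_bot_top hΨ]

end ICAux
end ICMain

theorem generated_by_distinguished_subgroups_aux
    {α : Type*} [PartialOrder α] [BoundedOrder α] (n : ℤ) (rk : α → ℤ)
    (hn : 1 ≤ n) (hK : IncComplex α n rk)
    (Γ : Subgroup (α ≃o α)) (hΓ : FlagTrans Γ)
    (F : ℤ → α) (hFflag : IsFlagOf Set.univ (F '' Set.Icc (-1 : ℤ) n))
    (hFrk : ∀ i ∈ Set.Icc (-1 : ℤ) n, rk (F i) = i)
    :
    Subgroup.closure (⋃ i ∈ Set.Icc (0 : ℤ) (n - 1), Rset Γ F n i) = Γ := by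
  classical
  set Φ₀ : Set α := F '' Set.Icc (-1 : ℤ) n with hΦ₀
  set S := ⋃ i ∈ Set.Icc (0 : ℤ) (n - 1), Rset Γ F n i with hS
  have hSΓ : S ⊆ (Γ : Set (α ≃o α)) := by
    intro g hg
    simp only [hS, Set.mem_iUnion] at hg
    obtain ⟨i, _, hgi⟩ := hg
    exact hgi.1
  apply le_antisymm ((Subgroup.closure_le Γ).2 hSΓ)
  intro g hg
  have main : ∀ Ψ : Set α, Relation.ReflTransGen ICAux.Step Φ₀ Ψ →
      ∃ h : α ≃o α, h ∈ Subgroup.closure S ∧ h ∈ Γ ∧ ⇑h '' Φ₀ = Ψ := by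
    intro Ψ hpath
    induction hpath with
    | refl => exact ⟨1, one_mem _, one_mem _, by simp⟩
    | @tail Θ Ψ' _ hstep ihp =>
      obtain ⟨h, hcl, hΓmem, himg⟩ := ihp
      obtain ⟨hΘ, hΨ', hadj⟩ := hstep
      obtain ⟨c, hc⟩ := Set.ncard_eq_one.mp hadj.1
      obtain ⟨d, hd⟩ := Set.ncard_eq_one.mp hadj.2
      have hcmem : c ∈ Θ \ Ψ' := by rw [hc]; rfl
      have hdmem : d ∈ Ψ' \ Θ := by rw [hd]; rfl
      set Ψ'' := ⇑h.symm '' Ψ' with hΨ''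
      have hΨ''flag : IsFlagOf Set.univ Ψ'' := ICAux.flag_image h.symm hΨ'
      have hsymmΘ : ⇑h.symm '' Θ = Φ₀ := by rw [← himg]; simp [Set.image_image]
      have hdiff1 : Φ₀ \ Ψ'' = {h.symm c} := by
        rw [← hsymmΘ, hΨ'', ← Set.image_diff h.symm.injective, hc, Set.image_singleton]
      have hdiff2 : Ψ'' \ Φ₀ = {h.symm d} := by
        rw [← hsymmΘ, hΨ'', ← Set.image_diff h.symm.injective, hd, Set.image_singleton]
      obtain ⟨t, htΓ, htimg⟩ := hΓ Φ₀ Ψ'' hFflag hΨ''flag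
      have hrkcd : rk c = rk d := ICAux.adj_rk_eq hK hΘ hΨ' hc hd
      have hrkc : rk (h.symm c) = rk c := ICAux.rk_apply hK h.symm c
      -- rk c ∈ [0, n-1]
      have hrkc_mem := ICAux.rk_mem hK c
      have hrkc_ne_bot : rk c ≠ -1 := by
        intro hbot
        have : c = ⊥ := ICAux.chain_rk_eq hK hΘ.2.1 hcmem.1 (ICAux.bot_mem hΘ)
          (by rw [hbot, hK.rk_bot])
        rw [this] at hcmem
        exact hcmem.2 (ICAux.bot_mem hΨ')
      have hrkc_ne_top : rk c ≠ n := by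
        intro htop
        have : c = ⊤ := ICAux.chain_rk_eq hK hΘ.2.1 hcmem.1 (ICAux.top_mem hΘ)
          (by rw [htop, hK.rk_top])
        rw [this] at hcmem
        exact hcmem.2 (ICAux.top_mem hΨ')
      have htR : t ∈ Rset Γ F n (rk c) := by
        refine ⟨htΓ, fun j hj hji => ?_⟩
        have hFj : F j ∈ Φ₀ := Set.mem_image_of_mem F hj
        have hFjrk : rk (F j) = j := hFrk j hj
        have hFjΨ'' : F j ∈ Ψ'' := by
          by_contra hmem
          have : F j ∈ Φ₀ \ Ψ'' := ⟨hFj, hmem⟩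
          rw [hdiff1] at this
          rw [Set.mem_singleton_iff] at this
          rw [this] at hFjrk
          rw [hrkc] at hFjrk
          exact hji hFjrk.symm
        have htFj : t (F j) ∈ Ψ'' := by rw [← htimg]; exact Set.mem_image_of_mem _ hFj
        have : rk (t (F j)) = rk (F j) := ICAux.rk_apply hK t (F j)
        exact ICAux.chain_rk_eq hK hΨ''flag.2.1 htFj hFjΨ'' this
      obtain ⟨hm1, hm2⟩ := hrkc_mem
      have htS : t ∈ S := by
        simp only [hS, Set.mem_iUnion]
        exact ⟨rk c, ⟨by omega, by omega⟩, htR⟩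
      refine ⟨h * t, mul_mem hcl (Subgroup.subset_closure htS), mul_mem hΓmem htΓ, ?_⟩
      have : ⇑(h * t) '' Φ₀ = ⇑h '' (⇑t '' Φ₀) := by
        rw [show ⇑(h * t) = ⇑h ∘ ⇑t from rfl, Set.image_comp]
      rw [this, htimg, hΨ'']
      simp [Set.image_image]
  have hgflag : IsFlagOf Set.univ (⇑g '' Φ₀) := ICAux.flag_image g hFflag
  obtain ⟨h, hcl, hΓmem, himg⟩ := main (⇑g '' Φ₀) (ICAux.flags_connected hK hFflag hgflag)
  set u : α ≃o α := h⁻¹ * g with hu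
  have huimg : ⇑u '' Φ₀ = Φ₀ := by
    have h1 : ⇑h '' (⇑u '' Φ₀) = ⇑h '' Φ₀ := by
      rw [← Set.image_comp, show ⇑h ∘ ⇑u = ⇑(h * u) from rfl, hu,
        mul_inv_cancel_left, himg]
    exact Set.image_injective.2 h.injective h1
  have hufix : ∀ j ∈ Set.Icc (-1 : ℤ) n, u (F j) = F j := by
    intro j hj
    have hFj : F j ∈ Φ₀ := Set.mem_image_of_mem F hj
    have h1 : u (F j) ∈ Φ₀ := by rw [← huimg]; exact Set.mem_image_of_mem _ hFj
    have h2 : rk (u (F j)) = rk (F j) := ICAux.rk_apply hK u (F j)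
    exact ICAux.chain_rk_eq hK hFflag.2.1 h1 hFj h2
  have huS : u ∈ S := by
    simp only [hS, Set.mem_iUnion]
    exact ⟨0, ⟨le_refl 0, by omega⟩, ⟨mul_mem (inv_mem hΓmem) hg,
      fun j hj _ => hufix j hj⟩⟩
  have : g = h * u := by rw [hu, mul_inv_cancel_left]
  rw [this]
  exact mul_mem hcl (Subgroup.subset_closure huS)

/-- a flag-transitive subgroup is generated by `R_0, …, R_{n-1}`. -/
theorem generated_by_distinguished_subgroups
    {α : Type*} [PartialOrder α] [BoundedOrder α] (n : ℤ) (rk : α → ℤ)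
    (hn : 1 ≤ n) (hK : IncComplex α n rk)
    (Γ : Subgroup (α ≃o α)) (hΓ : FlagTrans Γ)
    (F : ℤ → α) (hFflag : IsFlagOf Set.univ (F '' Set.Icc (-1 : ℤ) n))
    (hFrk : ∀ i ∈ Set.Icc (-1 : ℤ) n, rk (F i) = i)
    :
    Subgroup.closure (⋃ i ∈ Set.Icc (0 : ℤ) (n - 1), Rset Γ F n i) = Γ := by
  exact generated_by_distinguished_subgroups_aux n rk hn hK Γ hΓ F hFflag hFrk
end

section
/- Let K be a regular incidence complex of rank n ≥ 1 with flag-transitive subgroup Γ ≤ Aut(K) and distinguished generating subgroups R_{-1},...,R_n with respect to a base flag. Then for -1 ≤ i < j-1 ≤ n-1, the product sets satisfy R_i R_j = ⟨R_i, R_j⟩ = R_j R_i. -/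
open Set Pointwise

section Aux
variable {α : Type*} [PartialOrder α] [BoundedOrder α] {n : ℤ} {rk : α → ℤ}

lemma myFlagImage (g : α ≃o α) {Φ : Set α} (h : IsFlagOf Set.univ Φ) :
    IsFlagOf Set.univ (⇑g '' Φ) := by
  refine ⟨subset_univ _, h.2.1.image_of_map_rel _ _ _ (fun _ _ hab => g.monotone hab), ?_⟩
  intro Ψ _ hΨc hΨs
  have h1 : Φ ⊆ ⇑g.symm '' Ψ := by
    intro x hx
    exact ⟨g x, hΨs ⟨x, hx, rfl⟩, g.symm_apply_apply x⟩
  have h2 : ⇑g.symm '' Ψ = Φ :=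
    h.2.2 _ (subset_univ _) (hΨc.image_of_map_rel _ _ _ (fun _ _ hab => g.symm.monotone hab)) h1
  calc Ψ = ⇑g '' (⇑g.symm '' Ψ) := by
          rw [Set.image_image]; simp
       _ = ⇑g '' Φ := by rw [h2]

lemma myRkGe (hK : IncComplex α n rk) (a : α) : -1 ≤ rk a := by
  rcases eq_or_lt_of_le (bot_le : ⊥ ≤ a) with h | h
  · rw [← h, hK.rk_bot]
  · have := hK.rk_strictMono _ _ h
    rw [hK.rk_bot] at this; omega

lemma myRkLe (hK : IncComplex α n rk) (a : α) : rk a ≤ n := by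
  rcases eq_or_lt_of_le (le_top : a ≤ ⊤) with h | h
  · rw [h, hK.rk_top]
  · have := hK.rk_strictMono _ _ h
    rw [hK.rk_top] at this; omega

lemma myFlagUniq (hK : IncComplex α n rk) {Φ : Set α} (hΦ : IsFlagOf Set.univ Φ)
    {a b : α} (ha : a ∈ Φ) (hb : b ∈ Φ) (hr : rk a = rk b) : a = b := by
  by_contra hne
  rcases hΦ.2.1 ha hb hne with h | h
  · have := hK.rk_strictMono a b (lt_of_le_of_ne h hne); omega
  · have := hK.rk_strictMono b a (lt_of_le_of_ne h (Ne.symm hne)); omega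

lemma myCardBelow (hK : IncComplex α n rk) {Φ : Set α} (hΦ : IsFlagOf Set.univ Φ)
    {a : α} (ha : a ∈ Φ) : {b ∈ Φ | b < a}.ncard = (rk a + 1).toNat := by
  have himg : rk '' {b ∈ Φ | b < a} = Set.Icc (-1) (rk a - 1) := by
    ext k
    constructor
    · rintro ⟨b, ⟨hbΦ, hba⟩, rfl⟩
      exact ⟨myRkGe hK b, by have := hK.rk_strictMono b a hba; omega⟩
    · rintro ⟨hk1, hk2⟩
      have hkn : k ∈ Set.Icc (-1 : ℤ) n := ⟨hk1, by have := myRkLe hK a; omega⟩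
      obtain ⟨b, hbΦ, hbk⟩ := hK.flag_rk Φ hΦ k hkn
      refine ⟨b, ⟨hbΦ, ?_⟩, hbk⟩
      have hne : b ≠ a := fun h => by rw [h] at hbk; omega
      rcases hΦ.2.1 hbΦ ha hne with h | h
      · exact lt_of_le_of_ne h hne
      · have := hK.rk_strictMono a b (lt_of_le_of_ne h (Ne.symm hne)); omega
  have hinj : Set.InjOn rk {b ∈ Φ | b < a} :=
    fun x hx y hy hxy => myFlagUniq hK hΦ hx.1 hy.1 hxy
  have := Set.ncard_image_of_injOn hinj
  rw [himg] at this
  rw [← this, ← Finset.coe_Icc, Set.ncard_coe_finset, Int.card_Icc]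
  congr 1; omega

lemma myRkInv (hK : IncComplex α n rk) (g : α ≃o α) (a : α) : rk (g a) = rk a := by
  obtain ⟨Φ, haΦ, hΦ, -⟩ := hK.chain_flag {a} (Set.subsingleton_singleton.isChain)
  have ha : a ∈ Φ := haΦ rfl
  have h1 := myCardBelow hK hΦ ha
  have h2 := myCardBelow hK (myFlagImage g hΦ) ⟨a, ha, rfl⟩
  have himg : {b ∈ ⇑g '' Φ | b < g a} = ⇑g '' {b ∈ Φ | b < a} := by
    ext x
    constructor
    · rintro ⟨⟨c, hc, rfl⟩, hlt⟩
      exact ⟨c, ⟨hc, g.lt_iff_lt.mp hlt⟩, rfl⟩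
    · rintro ⟨c, ⟨hc, hlt⟩, rfl⟩
      exact ⟨⟨c, hc, rfl⟩, g.lt_iff_lt.mpr hlt⟩
  rw [himg, Set.ncard_image_of_injective _ g.injective, h1] at h2
  have hga := myRkGe hK (g a)
  have haa := myRkGe hK a
  omega

lemma myFMono {Γ : Subgroup (α ≃o α)} {F : ℤ → α}
    (hK : IncComplex α n rk) (hFflag : IsFlagOf Set.univ (F '' Set.Icc (-1 : ℤ) n))
    (hFrk : ∀ i ∈ Set.Icc (-1 : ℤ) n, rk (F i) = i)
    {k l : ℤ} (hk : k ∈ Set.Icc (-1 : ℤ) n) (hl : l ∈ Set.Icc (-1 : ℤ) n)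
    (hkl : k ≤ l) : F k ≤ F l := by
  rcases eq_or_lt_of_le hkl with rfl | hlt
  · exact le_rfl
  have hne : F k ≠ F l := by
    intro h
    have := hFrk k hk
    rw [h, hFrk l hl] at this; omega
  rcases hFflag.2.1 ⟨k, hk, rfl⟩ ⟨l, hl, rfl⟩ hne with h | h
  · exact h
  · have := hK.rk_strictMono _ _ (lt_of_le_of_ne h (Ne.symm hne))
    rw [hFrk k hk, hFrk l hl] at this; omega

/-- Key lemma: given `φ` fixing the neighbours `F (m-1)`, `F (m+1)` of `F m`,
there is `γ ∈ R_m` with `γ (F m) = φ (F m)`. -/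
lemma myExistsGamma {Γ : Subgroup (α ≃o α)} {F : ℤ → α}
    (hK : IncComplex α n rk) (hΓ : FlagTrans Γ)
    (hFflag : IsFlagOf Set.univ (F '' Set.Icc (-1 : ℤ) n))
    (hFrk : ∀ i ∈ Set.Icc (-1 : ℤ) n, rk (F i) = i)
    (m : ℤ) (hm : m ∈ Set.Icc (-1 : ℤ) n) (φ : α ≃o α)
    (hlo : -1 ≤ m - 1 → φ (F (m - 1)) = F (m - 1))
    (hhi : m + 1 ≤ n → φ (F (m + 1)) = F (m + 1)) :
    ∃ γ ∈ Rset Γ F n m, γ (F m) = φ (F m) := by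
  classical
  set F' : ℤ → α := fun k => if k = m then φ (F m) else F k with hF'
  have hF'rk : ∀ k ∈ Set.Icc (-1 : ℤ) n, rk (F' k) = k := by
    intro k hk
    by_cases h : k = m
    · subst h; simp only [hF', if_pos rfl]
      rw [myRkInv hK φ (F k), hFrk k hk]
    · simp only [hF', if_neg h]; exact hFrk k hk
  -- the modified set is a chain
  have hmono : ∀ k ∈ Set.Icc (-1 : ℤ) n, ∀ l ∈ Set.Icc (-1 : ℤ) n,
      k < l → F' k ≤ F' l := by
    intro k hk l hl hkl
    by_cases hkm : k = m
    · have hlm : l ≠ m := by omega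
      have hm1 : m + 1 ∈ Set.Icc (-1 : ℤ) n := ⟨by have := hm.1; omega, by have := hl.2; omega⟩
      simp only [hF', if_pos hkm, if_neg hlm]
      calc φ (F m) ≤ φ (F (m + 1)) :=
            φ.monotone (myFMono (Γ := Γ) hK hFflag hFrk hm hm1 (by omega))
        _ = F (m + 1) := hhi (by have := hl.2; omega)
        _ ≤ F l := myFMono (Γ := Γ) hK hFflag hFrk hm1 hl (by omega)
    · by_cases hlm : l = m
      · have hm1 : m - 1 ∈ Set.Icc (-1 : ℤ) n := ⟨by have := hk.1; omega, by have := hm.2; omega⟩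
        simp only [hF', if_neg hkm, if_pos hlm]
        calc F k ≤ F (m - 1) := myFMono (Γ := Γ) hK hFflag hFrk hk hm1 (by omega)
          _ = φ (F (m - 1)) := (hlo (by have := hk.1; omega)).symm
          _ ≤ φ (F m) := φ.monotone (myFMono (Γ := Γ) hK hFflag hFrk hm1 hm (by omega))
      · simp only [hF', if_neg hkm, if_neg hlm]
        exact myFMono (Γ := Γ) hK hFflag hFrk hk hl (le_of_lt hkl)
  have hchain : IsChain (· ≤ ·) (F' '' Set.Icc (-1 : ℤ) n) := by
    rintro x ⟨k, hk, rfl⟩ y ⟨l, hl, rfl⟩ hne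
    rcases lt_trichotomy k l with h | h | h
    · exact Or.inl (hmono k hk l hl h)
    · subst h; exact absurd rfl hne
    · exact Or.inr (hmono l hl k hk h)
  have hinj : Set.InjOn F' (Set.Icc (-1 : ℤ) n) := by
    intro x hx y hy hxy
    have h1 := hF'rk x hx
    have h2 := hF'rk y hy
    rw [hxy] at h1; omega
  have hncard : (F' '' Set.Icc (-1 : ℤ) n).ncard = (n + 2).toNat := by
    rw [Set.ncard_image_of_injOn hinj, ← Finset.coe_Icc, Set.ncard_coe_finset,
      Int.card_Icc]
    congr 1; omega
  obtain ⟨Ψ, hsub, hΨ, hΨcard⟩ := hK.chain_flag _ hchain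
  have hfin : Ψ.Finite := by
    apply Set.finite_of_ncard_ne_zero
    rw [hΨcard]
    have := hm.1; have := hm.2
    omega
  have hEq : F' '' Set.Icc (-1 : ℤ) n = Ψ :=
    Set.eq_of_subset_of_ncard_le hsub (by rw [hΨcard, hncard]) hfin
  have hflag' : IsFlagOf Set.univ (F' '' Set.Icc (-1 : ℤ) n) := hEq ▸ hΨ
  obtain ⟨γ, hγΓ, hγim⟩ := hΓ _ _ hFflag hflag'
  have key : ∀ k ∈ Set.Icc (-1 : ℤ) n, γ (F k) = F' k := by
    intro k hk
    have h1 : γ (F k) ∈ F' '' Set.Icc (-1 : ℤ) n := by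
      rw [← hγim]; exact ⟨F k, ⟨k, hk, rfl⟩, rfl⟩
    have h2 : F' k ∈ F' '' Set.Icc (-1 : ℤ) n := ⟨k, hk, rfl⟩
    apply myFlagUniq hK hflag' h1 h2
    rw [myRkInv hK γ (F k), hFrk k hk, hF'rk k hk]
  refine ⟨γ, ⟨hγΓ, ?_⟩, ?_⟩
  · intro k hk hkm
    rw [key k hk]; simp only [hF', if_neg hkm]
  · rw [key m hm]; simp only [hF', if_pos rfl]

end Aux

/-- for non-adjacent indices `i < j-1`, the product sets satisfy
`R_i R_j = ⟨R_i, R_j⟩ = R_j R_i`. -/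

theorem distinguished_subgroups_commute
    {α : Type*} [PartialOrder α] [BoundedOrder α] (n : ℤ) (rk : α → ℤ)
    (hn : 1 ≤ n) (hK : IncComplex α n rk)
    (Γ : Subgroup (α ≃o α)) (hΓ : FlagTrans Γ)
    (F : ℤ → α) (hFflag : IsFlagOf Set.univ (F '' Set.Icc (-1 : ℤ) n))
    (hFrk : ∀ i ∈ Set.Icc (-1 : ℤ) n, rk (F i) = i)
    (i j : ℤ) (hi : -1 ≤ i) (hij : i < j - 1) (hj : j ≤ n) :
    Rset Γ F n i * Rset Γ F n j =
        ↑(Subgroup.closure (Rset Γ F n i ∪ Rset Γ F n j)) ∧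
      (↑(Subgroup.closure (Rset Γ F n i ∪ Rset Γ F n j)) : Set (α ≃o α)) =
        Rset Γ F n j * Rset Γ F n i := by
  set U := Rset Γ F n i ∪ Rset Γ F n j with hU
  have hiIcc : i ∈ Set.Icc (-1 : ℤ) n := ⟨hi, by omega⟩
  have hjIcc : j ∈ Set.Icc (-1 : ℤ) n := ⟨by omega, hj⟩
  have hclosΓ : Subgroup.closure U ≤ Γ :=
    (Subgroup.closure_le Γ).mpr
      (Set.union_subset (fun g hg => hg.1) (fun g hg => hg.1))
  -- the subgroup of isos fixing all `F k` with `k ∉ {i, j}`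
  let T : Subgroup (α ≃o α) :=
  { carrier := {g | ∀ k ∈ Set.Icc (-1 : ℤ) n, k ≠ i → k ≠ j → g (F k) = F k}
    one_mem' := fun k _ _ _ => rfl
    mul_mem' := fun {a b} ha hb k hk h1 h2 => by
      show a (b (F k)) = F k
      rw [hb k hk h1 h2, ha k hk h1 h2]
    inv_mem' := fun {a} ha k hk h1 h2 => by
      show a⁻¹ (F k) = F k
      conv_lhs => rw [← ha k hk h1 h2]
      exact a.symm_apply_apply _ }
  have hclosT : Subgroup.closure U ≤ T := by
    apply (Subgroup.closure_le T).mpr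
    apply Set.union_subset
    · intro g hg k hk h1 _; exact hg.2 k hk h1
    · intro g hg k hk _ h2; exact hg.2 k hk h2
  have main : ∀ φ : α ≃o α, φ ∈ Subgroup.closure U →
      φ ∈ Rset Γ F n i * Rset Γ F n j ∧ φ ∈ Rset Γ F n j * Rset Γ F n i := by
    intro φ hφ
    have hφΓ : φ ∈ Γ := hclosΓ hφ
    have hφfix : ∀ k ∈ Set.Icc (-1 : ℤ) n, k ≠ i → k ≠ j → φ (F k) = F k :=
      hclosT hφ
    obtain ⟨γ, hγR, hγF⟩ := myExistsGamma hK hΓ hFflag hFrk i hiIcc φ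
      (fun h => hφfix (i - 1) ⟨h, by omega⟩ (by omega) (by omega))
      (fun h => hφfix (i + 1) ⟨by omega, h⟩ (by omega) (by omega))
    obtain ⟨δ, hδR, hδF⟩ := myExistsGamma hK hΓ hFflag hFrk j hjIcc φ
      (fun h => hφfix (j - 1) ⟨by omega, by omega⟩ (by omega) (by omega))
      (fun h => hφfix (j + 1) ⟨by omega, h⟩ (by omega) (by omega))
    constructor
    · have hψ : γ⁻¹ * φ ∈ Rset Γ F n j := by
        refine ⟨mul_mem (inv_mem hγR.1) hφΓ, ?_⟩
        intro k hk hkj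
        show γ⁻¹ (φ (F k)) = F k
        by_cases hki : k = i
        · subst hki; rw [← hγF]; exact γ.symm_apply_apply _
        · rw [hφfix k hk hki hkj]
          conv_lhs => rw [← hγR.2 k hk hki]
          exact γ.symm_apply_apply _
      have hφe : φ = γ * (γ⁻¹ * φ) := by group
      rw [hφe]
      exact Set.mul_mem_mul hγR hψ
    · have hψ : δ⁻¹ * φ ∈ Rset Γ F n i := by
        refine ⟨mul_mem (inv_mem hδR.1) hφΓ, ?_⟩
        intro k hk hki
        show δ⁻¹ (φ (F k)) = F k
        by_cases hkj : k = j
        · subst hkj; rw [← hδF]; exact δ.symm_apply_apply _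
        · rw [hφfix k hk hki hkj]
          conv_lhs => rw [← hδR.2 k hk hkj]
          exact δ.symm_apply_apply _
      have hφe : φ = δ * (δ⁻¹ * φ) := by group
      rw [hφe]
      exact Set.mul_mem_mul hδR hψ
  constructor
  · apply Set.Subset.antisymm
    · rintro x ⟨a, ha, b, hb, rfl⟩
      exact mul_mem (Subgroup.subset_closure (Or.inl ha))
        (Subgroup.subset_closure (Or.inr hb))
    · intro φ hφ
      exact (main φ hφ).1
  · apply Set.Subset.antisymm
    · intro φ hφ
      exact (main φ hφ).2
    · rintro x ⟨a, ha, b, hb, rfl⟩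
      exact mul_mem (Subgroup.subset_closure (Or.inr ha))
        (Subgroup.subset_closure (Or.inl hb))
end
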